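/- arXiv:1212.6809 — 5 statements merged into one kernel-verified Lean document; each statement's English description precedes it below -/
import Mathlib

section
/- Let α be a real number with |α| ≤ 2π, and let u ∈ C([0,1]) be the unitary defined by u(t) = exp(iαt). Then the C* exponential length of u equals |α|; that is, the infimum of the lengths of rectifiable paths of unitaries in C([0,1]) from the constant function 1 to u equals |α|. -/
open scoped Real ENNReal

/-- The C* exponential length of a unitary `u` in `C([0,1])`, realized as the infimum of
lengths of rectifiable paths of unitaries (continuous maps `[0,1] → S¹`) from `1` to `u`.
Here a path is a continuous family `F : [0,1] → C([0,1], S¹)` with `F 0 = 1`, `F 1 = u`,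
and its length is the total variation `eVariationOn F Set.univ`. -/
noncomputable def celCircle (u : C(unitInterval, Circle)) : ℝ≥0∞ :=
  ⨅ (F : unitInterval → C(unitInterval, Circle)) (_ : Continuous F)
    (_ : F 0 = 1) (_ : F 1 = u), eVariationOn F Set.univ

/-! ### Auxiliary lemmas -/

lemma chord_eq (θ : ℝ) : ‖Complex.exp (θ * Complex.I) - 1‖ = 2 * |Real.sin (θ / 2)| := by
  have h1 : Real.cos θ = 1 - 2 * Real.sin (θ / 2) ^ 2 := by
    have h := Real.cos_two_mul' (θ / 2)
    have h2 := Real.sin_sq_add_cos_sq (θ / 2)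
    rw [show 2 * (θ / 2) = θ by ring] at h
    nlinarith
  rw [Complex.exp_mul_I, Complex.norm_def, Complex.normSq_apply]
  simp only [Complex.sub_re, Complex.sub_im, Complex.add_re, Complex.add_im,
    Complex.mul_re, Complex.mul_im, Complex.I_re, Complex.I_im, Complex.one_re, Complex.one_im,
    Complex.cos_ofReal_re, Complex.cos_ofReal_im, Complex.sin_ofReal_re, Complex.sin_ofReal_im]
  convert Real.sqrt_sq (show (0:ℝ) ≤ 2 * |Real.sin (θ / 2)| by positivity) using 2
  have h2 := Real.sin_sq_add_cos_sq θ
  have h3 : |Real.sin (θ/2)| ^ 2 = Real.sin (θ/2) ^ 2 := sq_abs _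
  nlinarith

lemma dist_circle_exp (x y : ℝ) : dist (Circle.exp x) (Circle.exp y) = 2 * |Real.sin ((x - y) / 2)| := by
  show dist (Circle.exp x : ℂ) (Circle.exp y) = _
  rw [Complex.dist_eq, Circle.coe_exp, Circle.coe_exp]
  have : Complex.exp (↑x * Complex.I) - Complex.exp (↑y * Complex.I)
      = Complex.exp (↑y * Complex.I) * (Complex.exp (↑(x - y) * Complex.I) - 1) := by
    rw [mul_sub, ← Complex.exp_add, mul_one]
    push_cast
    ring_nf
  rw [this, norm_mul, Complex.norm_exp_ofReal_mul_I, one_mul, chord_eq]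

lemma circle_eq_exp_arg (z : Circle) : (z : ℂ) = Complex.exp (↑(Complex.arg z) * Complex.I) := by
  conv_lhs => rw [← Complex.norm_mul_exp_arg_mul_I (z : ℂ)]
  rw [Circle.norm_coe, Complex.ofReal_one, one_mul]

lemma circle_chord_eq_sin_arg (z : Circle) :
    ‖(z : ℂ) - 1‖ = 2 * |Real.sin (Complex.arg (z : ℂ) / 2)| := by
  conv_lhs => rw [circle_eq_exp_arg z]
  exact chord_eq _

lemma circle_mem_slitPlane {z : Circle} (hz : ‖(z : ℂ) - 1‖ < 2) :
    (z : ℂ) ∈ Complex.slitPlane := by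
  rw [Complex.mem_slitPlane_iff]
  by_contra h
  push_neg at h
  obtain ⟨h1, h2⟩ := h
  have hn := Circle.normSq_coe z
  rw [Complex.normSq_apply, h2] at hn
  have hre : (z : ℂ).re = -1 := by nlinarith
  have : (z : ℂ) = -1 := Complex.ext (by simp [hre]) (by simp [h2])
  rw [this] at hz
  norm_num at hz

lemma sin_lower {η y : ℝ} (hη : 0 < η) (hηπ : η ≤ π) (h0 : 0 ≤ y) (hy : y ≤ η) :
    Real.sin η / η * y ≤ Real.sin y := by
  have hconc := strictConcaveOn_sin_Icc.concaveOn
  have hab : (1 - y / η) + y / η = 1 := by ring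
  have ha : (0:ℝ) ≤ 1 - y / η := by
    have : y / η ≤ 1 := (div_le_one hη).2 hy
    linarith
  have hb : (0:ℝ) ≤ y / η := by positivity
  have h := hconc.2 (Set.mem_Icc.2 ⟨le_refl 0, Real.pi_pos.le⟩)
    (Set.mem_Icc.2 ⟨hη.le, hηπ⟩) ha hb hab
  simp only [smul_eq_mul, mul_zero, zero_add, Real.sin_zero] at h
  rw [div_mul_cancel₀ _ hη.ne'] at h
  calc Real.sin η / η * y = y / η * Real.sin η := by ring
    _ ≤ Real.sin y := h

lemma abs_sin_eq {x : ℝ} (hx : |x| ≤ π) : |Real.sin x| = Real.sin |x| := by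
  rcases le_or_gt 0 x with h | h
  · rw [abs_of_nonneg h, abs_of_nonneg (Real.sin_nonneg_of_nonneg_of_le_pi h
      (le_trans (le_abs_self x) hx))]
  · rw [abs_of_neg h, Real.sin_neg, abs_of_nonpos]
    apply Real.sin_nonpos_of_nonpos_of_neg_pi_le h.le
    nlinarith [abs_of_neg h, hx]

lemma sin_lower_abs {η x : ℝ} (hη : 0 < η) (hηπ : η ≤ π) (hx : |x| ≤ η) :
    Real.sin η / η * |x| ≤ |Real.sin x| := by
  rw [abs_sin_eq (hx.trans hηπ)]
  exact sin_lower hη hηπ (abs_nonneg x) hx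

lemma abs_lt_of_sin_lt {η y : ℝ} (hη0 : 0 < η) (hη : η ≤ π / 2) (hy : |y| ≤ π / 2)
    (h : |Real.sin y| < Real.sin η) : |y| < η := by
  by_contra h'
  push_neg at h'
  have hmem1 : η ∈ Set.Icc (-(π/2)) (π/2) := ⟨by linarith, hη⟩
  have hmem2 : |y| ∈ Set.Icc (-(π/2)) (π/2) := ⟨by linarith [abs_nonneg y], hy⟩
  have hmono := Real.strictMonoOn_sin.monotoneOn hmem1 hmem2 h'
  rw [← abs_sin_eq (hy.trans (by linarith [Real.pi_pos]))] at hmono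
  linarith

lemma const_of_two_pi_int {g : unitInterval → ℝ} (hg : Continuous g)
    (hint : ∀ t, ∃ k : ℤ, g t = 2 * π * k) (s t : unitInterval) : g s = g t := by
  choose k hk using hint
  have hlc : IsLocallyConstant k := by
    rw [IsLocallyConstant.iff_eventually_eq]
    intro x
    have hev : ∀ᶠ y in nhds x, dist (g y) (g x) < 2 * π :=
      Metric.tendsto_nhds.mp (hg.tendsto x) (2*π) (by positivity)
    filter_upwards [hev] with y hy
    have h1 : |((k y - k x : ℤ) : ℝ)| < 1 := by
      rw [Real.dist_eq, hk y, hk x] at hy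
      have hpi := Real.pi_pos
      push_cast
      rw [abs_lt]
      constructor <;> nlinarith [abs_lt.mp hy]
    rw [← Int.cast_abs] at h1
    have h2 : |k y - k x| < 1 := by exact_mod_cast h1
    have := Int.abs_lt_one_iff.mp h2
    omega
  rw [hk s, hk t, hlc.apply_eq_of_preconnectedSpace s t]

lemma circle_div_chord (a b : Circle) :
    ‖((a / b : Circle) : ℂ) - 1‖ = dist a b := by
  rw [show dist a b = dist (a : ℂ) b from rfl, Circle.coe_div, Complex.dist_eq,
    div_sub_one (Circle.coe_ne_zero b), norm_div, Circle.norm_coe, div_one]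

/-! ### The upper bound -/

noncomputable def pathF (α : ℝ) (s : ℝ) : C(unitInterval, Circle) :=
  ⟨fun t => Circle.exp (α * s * t), Circle.exp.continuous.comp (continuous_const.mul continuous_subtype_val)⟩

lemma chord_le (x : ℝ) : 2 * |Real.sin (x / 2)| ≤ |x| := by
  have h := Real.abs_sin_le_abs (x := x / 2)
  rw [abs_div] at h
  simp only [abs_two] at h
  linarith

lemma pathF_lip (α : ℝ) : LipschitzWith ‖α‖₊ (pathF α) := by
  apply LipschitzWith.of_dist_le_mul
  intro s s'
  rw [ContinuousMap.dist_le (by positivity)]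
  intro t
  show dist (Circle.exp (α * s * t)) (Circle.exp (α * s' * t)) ≤ _
  rw [dist_circle_exp]
  calc 2 * |Real.sin ((α * s * ↑t - α * s' * ↑t) / 2)| ≤ |α * s * ↑t - α * s' * ↑t| := chord_le _
    _ = |α| * |s - s'| * |(t:ℝ)| := by rw [show α * s * ↑t - α * s' * ↑t = (α * (s - s')) * t by ring, abs_mul, abs_mul]
    _ ≤ |α| * |s - s'| * 1 := by
        apply mul_le_mul_of_nonneg_left _ (by positivity)
        rw [abs_of_nonneg t.2.1]; exact t.2.2
    _ = ↑‖α‖₊ * dist s s' := by rw [mul_one, Real.dist_eq, coe_nnnorm, Real.norm_eq_abs]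

lemma celCircle_le (α : ℝ) (u : C(unitInterval, Circle))
    (hu : ∀ t : unitInterval, u t = Circle.exp (α * t)) :
    celCircle u ≤ ENNReal.ofReal |α| := by
  set F : unitInterval → C(unitInterval, Circle) := fun s => pathF α ↑s with hF
  have hc : Continuous F := (pathF_lip α).continuous.comp continuous_subtype_val
  have h0 : F 0 = 1 := by
    refine ContinuousMap.ext fun t => ?_
    have : F 0 t = Circle.exp (α * ((0:unitInterval):ℝ) * t) := rfl
    rw [this, ContinuousMap.one_apply]
    norm_num [Circle.exp_zero]
  have h1 : F 1 = u := by
    refine ContinuousMap.ext fun t => ?_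
    have : F 1 t = Circle.exp (α * ((1:unitInterval):ℝ) * t) := rfl
    rw [this, hu t]
    norm_num
  have hvar : eVariationOn F Set.univ ≤ ENNReal.ofReal |α| := by
    have hcomp : F = (pathF α) ∘ (Subtype.val : unitInterval → ℝ) := rfl
    rw [hcomp]
    calc eVariationOn ((pathF α) ∘ Subtype.val) Set.univ
        ≤ ↑‖α‖₊ * eVariationOn (Subtype.val : unitInterval → ℝ) Set.univ :=
          (pathF_lip α).lipschitzOnWith.comp_eVariationOn_le (Set.mapsTo_univ _ _)
      _ ≤ ↑‖α‖₊ * ENNReal.ofReal (((1:unitInterval):ℝ) - ((0:unitInterval):ℝ)) := by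
          apply mul_le_mul_right
          have hmono : MonotoneOn (Subtype.val : unitInterval → ℝ) Set.univ :=
            fun a _ b _ hab => hab
          have := hmono.eVariationOn_le (Set.mem_univ (0:unitInterval)) (Set.mem_univ 1)
          rwa [show Set.univ ∩ Set.Icc (0:unitInterval) 1 = Set.univ by
            apply Set.inter_eq_self_of_subset_left
            intro x _
            exact ⟨unitInterval.nonneg' , unitInterval.le_one'⟩] at this
      _ = ENNReal.ofReal |α| := by
          norm_num
          rw [← Real.norm_eq_abs, ofReal_norm, enorm_eq_nnnorm]
  calc celCircle u ≤ eVariationOn F Set.univ :=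
        iInf_le_of_le F <| iInf_le_of_le hc <| iInf_le_of_le h0 <| iInf_le_of_le h1 le_rfl
    _ ≤ _ := hvar

/-! ### The lower bound -/

lemma lower_core (α : ℝ) (hα : |α| ≤ 2 * π) {η : ℝ} (hη0 : 0 < η) (hη2 : η ≤ π / 2)
    (u : C(unitInterval, Circle)) (hu : ∀ t : unitInterval, u t = Circle.exp (α * t))
    (F : unitInterval → C(unitInterval, Circle)) (hc : Continuous F)
    (h0 : F 0 = 1) (h1 : F 1 = u) :
    ENNReal.ofReal (Real.sin η / η * |α|) ≤ eVariationOn F Set.univ := by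
  have hπ := Real.pi_pos
  have hηπ : η ≤ π := by linarith
  have hsη : 0 < Real.sin η := Real.sin_pos_of_pos_of_lt_pi hη0 (by linarith)
  have hsη1 : Real.sin η ≤ 1 := Real.sin_le_one η
  have hsr : 0 ≤ Real.sin η / η := by positivity
  obtain ⟨δ, hδ0, hδ⟩ := Metric.uniformContinuous_iff.mp
    (CompactSpace.uniformContinuous_of_continuous hc) (2 * Real.sin η) (by positivity)
  obtain ⟨n, hn⟩ := exists_nat_one_div_lt hδ0
  set N : ℕ := n + 1 with hNdef
  have hN0 : (0:ℝ) < N := by positivity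
  have hNδ : 1 / (N:ℝ) < δ := by exact_mod_cast hn
  have hvmem : ∀ j : ℕ, min ((j:ℝ)/N) 1 ∈ unitInterval :=
    fun j => ⟨le_min (by positivity) zero_le_one, min_le_right _ _⟩
  set v : ℕ → unitInterval := fun j => ⟨min ((j:ℝ)/N) 1, hvmem j⟩ with hvdef
  have hvmono : Monotone v := by
    intro a b hab
    show min ((a:ℝ)/N) 1 ≤ min ((b:ℝ)/N) 1
    refine min_le_min (by gcongr ?_ / N; exact_mod_cast hab) le_rfl
  have hv0 : v 0 = 0 := by
    apply Subtype.ext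
    show min (((0:ℕ):ℝ)/(N:ℝ)) 1 = ((0 : unitInterval) : ℝ)
    norm_num
  have hvN : v N = 1 := by
    apply Subtype.ext
    show min (((N:ℕ):ℝ)/(N:ℝ)) 1 = ((1 : unitInterval) : ℝ)
    rw [div_self hN0.ne']
    norm_num
  have hstep : ∀ i : ℕ, dist (F (v (i+1))) (F (v i)) < 2 * Real.sin η := by
    intro i
    apply hδ
    rw [Subtype.dist_eq, Real.dist_eq]
    show |min (((i+1:ℕ):ℝ)/N) 1 - min (((i:ℕ):ℝ)/N) 1| < δ
    calc |min (((i+1:ℕ):ℝ)/N) 1 - min (((i:ℕ):ℝ)/N) 1|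
        ≤ max |((i+1:ℕ):ℝ)/N - ((i:ℕ):ℝ)/N| |(1:ℝ) - 1| := abs_min_sub_min_le_max _ _ _ _
      _ ≤ 1 / N := by
          apply max_le _ (by simp)
          rw [div_sub_div_same]
          push_cast
          rw [show ((i:ℝ) + 1 - i) = 1 by ring]
          rw [abs_of_nonneg (by positivity)]
      _ < δ := hNδ
  set z : ℕ → unitInterval → Circle := fun i t => F (v (i+1)) t / F (v i) t with hzdef
  set D : ℕ → unitInterval → ℝ := fun i t => Complex.arg (z i t) with hDdef
  have hchord : ∀ i t, ‖(z i t : ℂ) - 1‖ = dist (F (v (i+1)) t) (F (v i) t) :=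
    fun i t => circle_div_chord _ _
  have hchord_lt : ∀ i t, ‖(z i t : ℂ) - 1‖ < 2 * Real.sin η := by
    intro i t
    rw [hchord]
    exact lt_of_le_of_lt (ContinuousMap.dist_apply_le_dist t) (hstep i)
  have hD2η : ∀ i t, |D i t / 2| < η := by
    intro i t
    have h1' := hchord_lt i t
    rw [circle_chord_eq_sin_arg] at h1'
    apply abs_lt_of_sin_lt hη0 hη2
    · rw [abs_div, abs_two]
      have := Complex.abs_arg_le_pi (z i t : ℂ)
      linarith
    · linarith
  have hDle : ∀ i t, Real.sin η / η * |D i t| ≤ dist (F (v (i+1)) t) (F (v i) t) := by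
    intro i t
    have h2 := sin_lower_abs hη0 hηπ (le_of_lt (lt_of_lt_of_le (hD2η i t) (le_refl η)))
    rw [← hchord, circle_chord_eq_sin_arg]
    have : Real.sin η / η * |D i t| = 2 * (Real.sin η / η * |D i t / 2|) := by
      rw [abs_div, abs_two]; ring
    rw [this]
    have : Complex.arg ((z i t : ℂ)) = D i t := rfl
    rw [this]
    linarith
  have hzcont : ∀ i, Continuous (fun t => ((z i t : ℂ))) := by
    intro i
    exact (continuous_subtype_val.comp (F (v (i+1))).continuous).div
      (continuous_subtype_val.comp (F (v i)).continuous) (fun t => Circle.coe_ne_zero _)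
  have hDcont : ∀ i, Continuous (D i) := by
    intro i
    rw [continuous_iff_continuousAt]
    intro t
    have hslit : ((z i t : ℂ)) ∈ Complex.slitPlane := by
      apply circle_mem_slitPlane
      calc ‖(z i t : ℂ) - 1‖ < 2 * Real.sin η := hchord_lt i t
        _ ≤ 2 := by linarith
    have := ContinuousAt.comp (g := Complex.arg) (f := fun t => ((z i t : ℂ))) (x := t)
      (Complex.continuousAt_arg hslit) ((hzcont i).continuousAt)
    exact this
  set h : unitInterval → ℝ := fun t => ∑ i ∈ Finset.range N, D i t with hhdef
  have hhcont : Continuous h := continuous_finset_sum _ (fun i _ => hDcont i)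
  have hexp : ∀ t, Complex.exp (↑(h t) * Complex.I) = (u t : ℂ) := by
    intro t
    have e1 : (↑(h t) * Complex.I) = ∑ i ∈ Finset.range N, (↑(D i t) * Complex.I) := by
      rw [← Finset.sum_mul]
      simp only [hhdef]
      push_cast
      rfl
    rw [e1, Complex.exp_sum]
    have e2 : ∀ i ∈ Finset.range N, Complex.exp (↑(D i t) * Complex.I) = ((z i t : ℂ)) :=
      fun i _ => (circle_eq_exp_arg (z i t)).symm
    rw [Finset.prod_congr rfl e2]
    have e3 : ((∏ i ∈ Finset.range N, z i t : Circle) : ℂ) = ∏ i ∈ Finset.range N, ((z i t : ℂ)) :=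
      map_prod Circle.coeHom (fun i => z i t) (Finset.range N)
    rw [← e3]
    have e4 : ∏ i ∈ Finset.range N, z i t = F (v N) t / F (v 0) t :=
      Finset.prod_range_div (fun i => F (v i) t) N
    rw [e4, hv0, hvN, h0, h1]
    simp
  set g : unitInterval → ℝ := fun t => h t - α * t with hgdef
  have hgcont : Continuous g := hhcont.sub (continuous_const.mul continuous_subtype_val)
  have hint : ∀ t, ∃ k : ℤ, g t = 2 * π * k := by
    intro t
    have : Complex.exp (↑(g t) * Complex.I) = 1 := by
      have e5 : (↑(g t) * Complex.I) = ↑(h t) * Complex.I - ↑(α * (t:ℝ)) * Complex.I := by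
        simp only [hgdef]
        push_cast
        ring
      rw [e5, Complex.exp_sub, hexp, hu t, Circle.coe_exp, div_self (Complex.exp_ne_zero _)]
    obtain ⟨m, hm⟩ := Complex.exp_eq_one_iff.mp this
    refine ⟨m, ?_⟩
    rw [show (↑m * (2 * ↑π * Complex.I) : ℂ) = (↑m * (2 * ↑π)) * Complex.I by ring] at hm
    have h6 : (↑(g t) : ℂ) = ↑m * (2 * ↑π) := mul_right_cancel₀ Complex.I_ne_zero hm
    have h7 : g t = (m:ℝ) * (2 * π) := by exact_mod_cast h6
    rw [h7]; ring
  have hgconst : ∀ t, g t = g 0 := fun t => const_of_two_pi_int hgcont hint t 0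
  have hg0 : g 0 = h 0 := by
    show h 0 - α * ((0:unitInterval):ℝ) = h 0
    norm_num
  set S : ℝ := ∑ i ∈ Finset.range N, dist (F (v (i+1))) (F (v i)) with hSdef
  have hSt : ∀ t, Real.sin η / η * |h t| ≤ S := by
    intro t
    calc Real.sin η / η * |h t| ≤ Real.sin η / η * ∑ i ∈ Finset.range N, |D i t| := by
          apply mul_le_mul_of_nonneg_left (Finset.abs_sum_le_sum_abs _ _) hsr
      _ = ∑ i ∈ Finset.range N, Real.sin η / η * |D i t| := Finset.mul_sum _ _ _
      _ ≤ ∑ i ∈ Finset.range N, dist (F (v (i+1)) t) (F (v i) t) :=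
          Finset.sum_le_sum (fun i _ => hDle i t)
      _ ≤ S := Finset.sum_le_sum (fun i _ => ContinuousMap.dist_apply_le_dist t)
  have hαS : Real.sin η / η * |α| ≤ S := by
    obtain ⟨k, hk⟩ := hint 0
    by_cases hk0 : k = 0
    · have hh0 : h 0 = 0 := by rw [← hg0, hk, hk0]; norm_num
      have hh1 : h 1 = α := by
        have := hgconst 1
        rw [hg0, hh0] at this
        show h 1 = α
        have h1c : ((1:unitInterval):ℝ) = 1 := rfl
        rw [hgdef] at this
        simp only [h1c, mul_one] at this
        linarith
      calc Real.sin η / η * |α| = Real.sin η / η * |h 1| := by rw [hh1]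
        _ ≤ S := hSt 1
    · have hh0 : |h 0| ≥ 2 * π := by
        rw [← hg0, hk]
        rw [abs_mul]
        have : |((k:ℝ))| ≥ 1 := by
          rw [← Int.cast_abs]
          exact_mod_cast Int.one_le_abs (by exact_mod_cast hk0)
        have h2π : |2 * π| = 2 * π := abs_of_pos (by positivity)
        nlinarith
      calc Real.sin η / η * |α| ≤ Real.sin η / η * |h 0| := by
            apply mul_le_mul_of_nonneg_left (by linarith) hsr
        _ ≤ S := hSt 0
  calc ENNReal.ofReal (Real.sin η / η * |α|) ≤ ENNReal.ofReal S := ENNReal.ofReal_le_ofReal hαS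
    _ = ∑ i ∈ Finset.range N, edist (F (v (i+1))) (F (v i)) := by
        rw [ENNReal.ofReal_sum_of_nonneg (fun i _ => dist_nonneg)]
        exact Finset.sum_congr rfl (fun i _ => (edist_dist _ _).symm)
    _ ≤ eVariationOn F Set.univ := eVariationOn.sum_le (f := F) (n := N) hvmono (fun i => Set.mem_univ _)

/-- If `|α| ≤ 2π` and `u(t) = exp(iαt)`, then the C* exponential length of `u`,
i.e. the infimum of lengths of rectifiable paths of unitaries in `C([0,1])`
from `1` to `u`, equals `|α|`. -/
theorem cel_exp_eq_abs (α : ℝ) (hα : |α| ≤ 2 * π)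
    (u : C(unitInterval, Circle)) (hu : ∀ t : unitInterval, u t = Circle.exp (α * t)) :
    celCircle u = ENNReal.ofReal |α| := by
  refine le_antisymm (celCircle_le α u hu) ?_
  rw [celCircle]
  refine le_iInf fun F => le_iInf fun hc => le_iInf fun h0 => le_iInf fun h1 => ?_
  have hcore : ∀ η : ℝ, 0 < η → η ≤ π / 2 →
      ENNReal.ofReal (Real.sin η / η * |α|) ≤ eVariationOn F Set.univ :=
    fun η hη1 hη2 => lower_core α hα hη1 hη2 u hu F hc h0 h1
  have hπ := Real.pi_pos
  have hslope : Filter.Tendsto (fun η : ℝ => Real.sin η / η) (nhdsWithin 0 {(0:ℝ)}ᶜ) (nhds 1) := by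
    have h := hasDerivAt_iff_tendsto_slope.mp (Real.hasDerivAt_sin 0)
    rw [Real.cos_zero] at h
    refine h.congr' ?_
    filter_upwards with η
    rw [slope_def_field, Real.sin_zero, sub_zero, sub_zero]
  have h2 : Filter.Tendsto (fun η : ℝ => Real.sin η / η * |α|) (nhdsWithin 0 (Set.Ioi 0))
      (nhds (1 * |α|)) := by
    apply Filter.Tendsto.mul_const
    exact hslope.mono_left (nhdsWithin_mono 0 (fun x hx => Set.mem_compl (by
      simp only [Set.mem_singleton_iff]; exact ne_of_gt hx)))
  rw [one_mul] at h2
  have h3 : Filter.Tendsto (fun η : ℝ => ENNReal.ofReal (Real.sin η / η * |α|))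
      (nhdsWithin 0 (Set.Ioi 0)) (nhds (ENNReal.ofReal |α|)) :=
    (ENNReal.continuous_ofReal.continuousAt).tendsto.comp h2
  apply le_of_tendsto h3
  filter_upwards [Ioo_mem_nhdsGT_of_mem (c := 0) (a := π/2) (Set.mem_Ico.2 ⟨le_refl 0, by positivity⟩)] with η hη
  exact hcore η hη.1 (le_of_lt hη.2)
end

section
/- Let α be a real number and u ∈ C([0,1]) the unitary u(t) = exp(iαt). Then the infimum of lengths of rectifiable paths in the unitary group of C([0,1]) from 1 to u equals min over integers k of max over t ∈ [0,1] of |αt − 2kπ|. -/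
open scoped Real ENNReal

section CelAux

open Complex


private lemma min_lip_aux {a x y : ℝ} (h : x ≤ y) : |min a x - min a y| ≤ |x - y| := by
  have A : min a x ≤ min a y := min_le_min le_rfl h
  have B : min a y ≤ min a x + (y - x) := by
    rcases le_total a x with h1 | h1
    · rw [min_eq_left h1]; exact le_trans (min_le_left _ _) (by linarith)
    · rw [min_eq_right h1]; exact le_trans (min_le_right _ _) (by linarith)
  rw [abs_sub_comm, _root_.abs_of_nonneg (sub_nonneg.2 A), abs_sub_comm x,
    _root_.abs_of_nonneg (sub_nonneg.2 h)]
  linarith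

lemma min_lip (a x y : ℝ) : |min a x - min a y| ≤ |x - y| := by
  rcases le_total x y with h | h
  · exact min_lip_aux h
  · rw [abs_sub_comm, abs_sub_comm x]; exact min_lip_aux h

lemma circle_dist_exp (a b : ℝ) :
    dist (Circle.exp a) (Circle.exp b) = 2 * |Real.sin ((a - b) / 2)| := by
  change dist (Circle.exp a : ℂ) (Circle.exp b : ℂ) = _
  rw [Circle.coe_exp, Circle.coe_exp, Complex.dist_eq]
  have h1 : Complex.exp ((a:ℂ) * I) - Complex.exp ((b:ℂ) * I)
      = Complex.exp ((((a+b)/2 : ℝ) : ℂ) * I) *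
        (Complex.exp ((((a-b)/2 : ℝ):ℂ) * I) - Complex.exp (((-((a-b)/2) : ℝ):ℂ) * I)) := by
    rw [mul_sub, ← Complex.exp_add, ← Complex.exp_add]
    push_cast
    ring_nf
  rw [h1, norm_mul, Complex.norm_exp_ofReal_mul_I, one_mul]
  have h2 : Complex.exp ((((a-b)/2 : ℝ):ℂ) * I) - Complex.exp (((-((a-b)/2) : ℝ):ℂ) * I)
      = (2 * Real.sin ((a-b)/2) : ℝ) * I := by
    rw [Complex.exp_mul_I, Complex.exp_mul_I, ← Complex.ofReal_cos, ← Complex.ofReal_sin,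
      ← Complex.ofReal_cos, ← Complex.ofReal_sin, Real.cos_neg, Real.sin_neg]
    push_cast
    ring
  rw [h2, norm_mul, Complex.norm_I, Complex.norm_real, Real.norm_eq_abs, mul_one, abs_mul]
  norm_num

lemma int_gap {m m' : ℤ} (h : |(m:ℝ) - m'| < 1) : m = m' := by
  have h2 : |((m - m' : ℤ) : ℝ)| < 1 := by push_cast; exact h
  have h3 : ((|m - m'| : ℤ) : ℝ) < 1 := by rw [Int.cast_abs]; exact h2
  have h4 : |m - m'| < 1 := by exact_mod_cast h3
  have := abs_lt.mp h4
  omega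

lemma two_sin_half_ge {x d : ℝ} (h1 : |x| ≤ 1) (hd : |x| ≤ d) :
    (1 - d^2/16) * |x| ≤ 2 * |Real.sin (x/2)| := by
  have hpi : (3:ℝ) < π := Real.pi_gt_three
  have habs : |Real.sin (x/2)| = Real.sin (|x|/2) := by
    rcases le_total 0 x with h | h
    · rw [_root_.abs_of_nonneg h, _root_.abs_of_nonneg (Real.sin_nonneg_of_nonneg_of_le_pi
        (by linarith) (by rw [_root_.abs_of_nonneg h] at h1; linarith))]
    · rw [_root_.abs_of_nonpos h, show x/2 = -(-x/2) by ring, Real.sin_neg, abs_neg,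
        _root_.abs_of_nonneg (Real.sin_nonneg_of_nonneg_of_le_pi (by linarith)
          (by rw [_root_.abs_of_nonpos h] at h1; linarith))]
  rw [habs]
  rcases eq_or_lt_of_le (abs_nonneg x) with h0 | h0
  · rw [← h0]; simp
  · have hs := Real.sin_gt_sub_cube (by linarith : (0:ℝ) < |x|/2)
    nlinarith [mul_le_mul hd hd (abs_nonneg x) (le_trans (abs_nonneg x) hd), abs_nonneg x]
noncomputable def circleHom : Circle →* ℂ where
  toFun := (↑)
  map_one' := Circle.coe_one
  map_mul' := Circle.coe_mul

lemma exists_lift (G : C(unitInterval × unitInterval, Circle)) (hG0 : ∀ t, G (0, t) = 1) :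
    ∃ g : unitInterval × unitInterval → ℝ, Continuous g ∧ (∀ t, g (0, t) = 0) ∧
      ∀ p, Circle.exp (g p) = G p := by
  have hGc : UniformContinuous G := CompactSpace.uniformContinuous_of_continuous G.continuous
  obtain ⟨δ, hδ, hδ'⟩ := Metric.uniformContinuous_iff.mp hGc 1 one_pos
  obtain ⟨n, hn⟩ := exists_nat_one_div_lt hδ
  set N : ℕ := n + 1 with hNdef
  have hN : (0:ℝ) < N := by positivity
  have hNδ : 1 / (N:ℝ) < δ := by exact_mod_cast hn
  -- the clamping maps
  set c : ℕ → unitInterval → unitInterval := fun j s =>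
    ⟨min s.1 (j / N), ⟨le_min s.2.1 (by positivity), min_le_of_left_le s.2.2⟩⟩ with hc
  have hc0 : ∀ j, c j 0 = 0 := fun j => Subtype.ext (by
    simp only [hc]
    exact min_eq_left (by positivity))
  have hc00 : ∀ s, c 0 s = 0 := fun s => Subtype.ext (by
    simp only [hc, Nat.cast_zero, zero_div]
    exact min_eq_right s.2.1)
  have hcN : ∀ s, c N s = s := fun s => Subtype.ext (by
    simp only [hc]
    rw [div_self hN.ne']
    exact min_eq_left s.2.2)
  have hcdist : ∀ j (s : unitInterval), dist (c (j+1) s) (c j s) ≤ 1 / N := by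
    intro j s
    rw [Subtype.dist_eq, Real.dist_eq]
    refine le_trans (min_lip _ _ _) ?_
    have h2 : ((j:ℝ)+1) / N - j / N = 1 / N := by ring
    rw [show ((j+1:ℕ):ℝ) = (j:ℝ)+1 by push_cast; ring, h2, abs_of_pos (by positivity)]
  have hccont : ∀ j, Continuous fun p : unitInterval × unitInterval => c j p.1 :=
    fun j => Continuous.subtype_mk ((continuous_subtype_val.comp continuous_fst).min
      continuous_const) _
  -- the circle-valued increments
  set z : ℕ → unitInterval × unitInterval → Circle := fun j p => G (c j p.1, p.2) with hz
  have hzc : ∀ j, Continuous (z j) :=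
    fun j => G.continuous.comp ((hccont j).prodMk continuous_snd)
  have hzdist : ∀ j p, dist (z (j+1) p) (z j p) < 1 := by
    intro j p
    refine hδ' ?_
    rw [Prod.dist_eq]
    simp only [dist_self]
    exact lt_of_le_of_lt (max_le (hcdist j p.1) (by positivity)) hNδ
  set q : ℕ → unitInterval × unitInterval → ℂ := fun j p =>
    ((z (j+1) p / z j p : Circle) : ℂ) with hq
  have hqabs : ∀ j p, ‖q j p‖ = 1 := fun j p => Circle.norm_coe _
  have hqsub : ∀ j p, q j p - 1 = ((z (j+1) p : ℂ) - z j p) / z j p := by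
    intro j p
    rw [hq]
    push_cast [Circle.coe_div]
    field_simp
  have hqre : ∀ j p, 0 < (q j p).re := by
    intro j p
    have h1 : ‖q j p - 1‖ < 1 := by
      rw [hqsub, norm_div, Circle.norm_coe, div_one, ← Complex.dist_eq]
      exact hzdist j p
    have e1 : Complex.normSq (q j p - 1) < 1 := by
      rw [← Complex.sq_norm]
      nlinarith [norm_nonneg (q j p - 1)]
    have e2 : Complex.normSq (q j p) = 1 := by
      rw [← Complex.sq_norm, hqabs]; norm_num
    have e3 := Complex.normSq_sub (q j p) 1
    simp only [map_one, mul_one, Complex.normSq_one, Complex.one_re] at e3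
    rw [e2] at e3
    linarith
  have hqcont : ∀ j, Continuous (q j) := by
    intro j
    exact continuous_subtype_val.comp ((hzc (j+1)).div' (hzc j))
  -- the lift
  set g : unitInterval × unitInterval → ℝ :=
    fun p => ∑ j ∈ Finset.range N, Complex.arg (q j p) with hg
  refine ⟨g, ?_, ?_, ?_⟩
  · refine continuous_finset_sum _ fun j _ => ?_
    rw [continuous_iff_continuousAt]
    intro p
    exact (Complex.continuousAt_arg (Or.inl (hqre j p))).comp (hqcont j).continuousAt
  · intro t
    rw [hg]
    refine Finset.sum_eq_zero fun j _ => ?_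
    have : q j (0, t) = 1 := by
      rw [hq]
      simp only [hz, hc0, hG0]
      norm_num
    rw [this, Complex.arg_one]
  · intro p
    apply Circle.coe_injective
    rw [Circle.coe_exp, hg]
    push_cast
    rw [Finset.sum_mul, Complex.exp_sum]
    have hterm : ∀ j ∈ Finset.range N,
        Complex.exp ((Complex.arg (q j p) : ℂ) * Complex.I) = q j p := by
      intro j _
      have := Complex.norm_mul_exp_arg_mul_I (q j p)
      rwa [hqabs, Complex.ofReal_one, one_mul] at this
    rw [Finset.prod_congr rfl hterm]
    have hz0 : z 0 p = 1 := by rw [hz]; simp only [hc00]; exact hG0 p.2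
    have hzN : z N p = G p := by rw [hz]; simp only [hcN]
    have hprod : (∏ j ∈ Finset.range N, (z (j+1) p / z j p)) = G p := by
      rw [Finset.prod_range_div (fun j => z j p) N, hz0, hzN, div_one]
    have h5 : ∏ j ∈ Finset.range N, q j p
        = circleHom (∏ j ∈ Finset.range N, (z (j+1) p / z j p)) := by
      rw [map_prod]; rfl
    rw [h5, hprod]
    rfl
lemma abs_sin_le_abs (x : ℝ) : |Real.sin x| ≤ |x| := by
  have key : ∀ y : ℝ, 0 ≤ y → |Real.sin y| ≤ y := by
    intro y hy
    rcases le_total y 1 with h | h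
    · rw [_root_.abs_of_nonneg (Real.sin_nonneg_of_nonneg_of_le_pi hy
        (le_trans h (by nlinarith [Real.pi_gt_three])))]
      exact Real.sin_le hy
    · exact le_trans (Real.abs_sin_le_one y) h
  rcases le_total 0 x with h | h
  · rw [_root_.abs_of_nonneg h]; exact key x h
  · rw [_root_.abs_of_nonpos h, ← abs_neg (Real.sin x), ← Real.sin_neg]
    exact key (-x) (by linarith)

lemma int_constant {e : unitInterval → ℝ} (he : Continuous e)
    (h : ∀ t, ∃ m : ℤ, e t = m) (t : unitInterval) : e t = e 0 := by
  set S := {t : unitInterval | e t = e 0} with hS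
  have hcl : IsClosed S := isClosed_eq he continuous_const
  have hop : IsOpen S := by
    rw [Metric.isOpen_iff]
    intro t₁ ht₁
    obtain ⟨δ, hδ, hδ'⟩ := Metric.continuous_iff.mp he t₁ (1/2) (by norm_num)
    refine ⟨δ, hδ, fun t' ht' => ?_⟩
    obtain ⟨m, hm⟩ := h t'
    obtain ⟨m0, hm0⟩ := h t₁
    have h1 : |e t' - e t₁| < 1 := by
      have := hδ' t' (Metric.mem_ball.mp ht')
      rw [Real.dist_eq] at this; linarith
    rw [hm, hm0] at h1
    have h2 : m = m0 := int_gap h1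
    show e t' = e 0
    rw [hm, h2, ← hm0]
    exact ht₁
  have huniv : S = Set.univ := IsClopen.eq_univ ⟨hcl, hop⟩ ⟨0, rfl⟩
  show t ∈ S
  rw [huniv]; trivial

end CelAux

lemma upper_bound (α : ℝ) (u : C(unitInterval, Circle))
    (hu : ∀ t : unitInterval, u t = Circle.exp (α * t)) (k : ℤ) (M : ℝ) (hM0 : 0 ≤ M)
    (hM : ∀ t : unitInterval, |α * t - 2 * k * π| ≤ M) :
    celCircle u ≤ ENNReal.ofReal M := by
  set h : unitInterval → ℝ := fun t => α * t - 2 * k * π with hh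
  have hhc : Continuous h :=
    (continuous_const.mul continuous_subtype_val).sub continuous_const
  set Gm : C(unitInterval × unitInterval, Circle) :=
    ⟨fun p => Circle.exp (p.1 * h p.2), Circle.exp.continuous.comp
      ((continuous_subtype_val.comp continuous_fst).mul (hhc.comp continuous_snd))⟩ with hGm
  set F : unitInterval → C(unitInterval, Circle) := fun s => Gm.curry s with hF
  have hFc : Continuous F := Gm.curry.continuous
  have hF0 : F 0 = 1 := by
    refine ContinuousMap.ext fun t => ?_
    show Circle.exp (((0:unitInterval):ℝ) * h t) = _
    rw [Set.Icc.coe_zero, zero_mul, Circle.exp_zero, ContinuousMap.one_apply]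
  have hF1 : F 1 = u := by
    refine ContinuousMap.ext fun t => ?_
    show Circle.exp (((1:unitInterval):ℝ) * h t) = u t
    rw [hu t, Set.Icc.coe_one, one_mul, hh]
    show Circle.exp (α * t - 2 * k * π) = _
    rw [sub_eq_add_neg, Circle.exp_add,
      show -(2*(k:ℝ)*π) = ((-k : ℤ):ℝ) * (2*π) by push_cast; ring,
      Circle.exp_int_mul_two_pi, mul_one]
  have hlip : ∀ a b : unitInterval, a ≤ b → dist (F a) (F b) ≤ M * ((b:ℝ) - a) := by
    intro a b hab
    have hba : (0:ℝ) ≤ (b:ℝ) - a := sub_nonneg.2 hab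
    rw [ContinuousMap.dist_le (mul_nonneg hM0 hba)]
    intro t
    show dist (Circle.exp ((a:ℝ) * h t)) (Circle.exp ((b:ℝ) * h t)) ≤ _
    rw [circle_dist_exp]
    have hx : |((a:ℝ) * h t - b * h t)| = ((b:ℝ) - a) * |h t| := by
      rw [abs_sub_comm, show (b:ℝ) * h t - a * h t = ((b:ℝ) - a) * h t by ring, abs_mul,
        _root_.abs_of_nonneg hba]
    calc 2 * |Real.sin (((a:ℝ) * h t - b * h t)/2)|
        ≤ 2 * |((a:ℝ) * h t - b * h t)/2| := by
          have := abs_sin_le_abs (((a:ℝ) * h t - b * h t)/2)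
          linarith
      _ = ((b:ℝ) - a) * |h t| := by rw [abs_div, _root_.abs_two, ← hx]; ring
      _ ≤ ((b:ℝ) - a) * M := mul_le_mul_of_nonneg_left (hM t) hba
      _ = M * ((b:ℝ) - a) := mul_comm _ _
  have hvar : eVariationOn F Set.univ ≤ ENNReal.ofReal M := by
    rw [eVariationOn]
    refine iSup_le ?_
    rintro ⟨m, us, hus, -⟩
    have key : ∀ i, edist (F (us (i+1))) (F (us i))
        ≤ ENNReal.ofReal (M * ((us (i+1) : ℝ) - us i)) := by
      intro i
      rw [edist_dist, dist_comm]
      exact ENNReal.ofReal_le_ofReal (hlip _ _ (hus (Nat.le_succ i)))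
    calc ∑ i ∈ Finset.range m, edist (F (us (i+1))) (F (us i))
        ≤ ∑ i ∈ Finset.range m, ENNReal.ofReal (M * ((us (i+1) : ℝ) - us i)) :=
          Finset.sum_le_sum fun i _ => key i
      _ = ENNReal.ofReal (∑ i ∈ Finset.range m, M * ((us (i+1) : ℝ) - us i)) :=
          (ENNReal.ofReal_sum_of_nonneg fun i _ =>
            mul_nonneg hM0 (sub_nonneg.2 (Subtype.coe_le_coe.2 (hus (Nat.le_succ i))))).symm
      _ ≤ ENNReal.ofReal M := by
          rw [← Finset.mul_sum, Finset.sum_range_sub (fun i => ((us i : ℝ)))]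
          refine ENNReal.ofReal_le_ofReal ?_
          have h1 : (us m : ℝ) - us 0 ≤ 1 := by
            have := (us m).2.2; have := (us 0).2.1; linarith
          nlinarith
  exact le_trans (iInf_le_of_le F (iInf_le_of_le hFc (iInf_le_of_le hF0 (iInf_le _ hF1)))) hvar

lemma lower_bound (α : ℝ) (u : C(unitInterval, Circle))
    (hu : ∀ t : unitInterval, u t = Circle.exp (α * t))
    {F : unitInterval → C(unitInterval, Circle)} (hFc : Continuous F)
    (hF0 : F 0 = 1) (hF1 : F 1 = u) :
    ∃ k : ℤ, ENNReal.ofReal (⨆ t : unitInterval, |α * t - 2 * k * π|)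
      ≤ eVariationOn F Set.univ := by
  set Fc : C(unitInterval, C(unitInterval, Circle)) := ⟨F, hFc⟩ with hFcdef
  set G : C(unitInterval × unitInterval, Circle) := Fc.uncurry with hG
  have hGap : ∀ p : unitInterval × unitInterval, G p = F p.1 p.2 := fun p => rfl
  have hG0 : ∀ t, G (0, t) = 1 := fun t => by
    rw [hGap, hF0, ContinuousMap.one_apply]
  obtain ⟨g, hgc, hg0, hge⟩ := exists_lift G hG0
  set e : unitInterval → ℝ := fun t => g (1, t) with he
  have hec : Continuous e := hgc.comp (continuous_const.prodMk continuous_id)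
  have heexp : ∀ t, Circle.exp (e t) = Circle.exp (α * t) := by
    intro t
    rw [he]
    show Circle.exp (g (1, t)) = _
    rw [hge (1, t), hGap, hF1, hu t]
  have hπ : (2:ℝ) * π ≠ 0 := by positivity
  have hint : ∀ t, ∃ m : ℤ, (e t - α * t) / (2 * π) = m := by
    intro t
    obtain ⟨m, hm⟩ := Circle.exp_eq_exp.mp (heexp t)
    exact ⟨m, by rw [hm]; field_simp; ring⟩
  have hDc : Continuous fun t : unitInterval => (e t - α * t) / (2 * π) :=
    (hec.sub (continuous_const.mul continuous_subtype_val)).div_const _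
  obtain ⟨m0, hm0⟩ := hint 0
  have heform : ∀ t, e t = α * t + m0 * (2 * π) := by
    intro t
    have h1 := int_constant hDc hint t
    rw [hm0] at h1
    rw [div_eq_iff hπ] at h1
    linarith
  refine ⟨-m0, ?_⟩
  have hfk : ∀ t : unitInterval, |α * t - 2 * ((-m0 : ℤ):ℝ) * π| = |e t| := by
    intro t
    rw [heform t]
    congr 1
    push_cast
    ring
  obtain ⟨t₀, -, hmax⟩ := IsCompact.exists_isMaxOn isCompact_univ ⟨0, trivial⟩
    ((continuous_abs.comp hec).continuousOn)
  have hfk_le : (⨆ t : unitInterval, |α * t - 2 * ((-m0 : ℤ):ℝ) * π|) ≤ |e t₀| := by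
    refine ciSup_le fun t => ?_
    rw [hfk t]
    exact hmax (Set.mem_univ t)
  refine le_trans (ENNReal.ofReal_le_ofReal hfk_le) ?_
  -- core estimate
  have core : ∀ ε : ℝ, 0 < ε → ε ≤ 1 →
      ENNReal.ofReal ((1 - ε^2/16) * |e t₀|) ≤ eVariationOn F Set.univ := by
    intro ε hε hε1
    have hgu : UniformContinuous g := CompactSpace.uniformContinuous_of_continuous hgc
    obtain ⟨δ, hδ, hδ'⟩ := Metric.uniformContinuous_iff.mp hgu ε hε
    obtain ⟨n, hn⟩ := exists_nat_one_div_lt hδ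
    set N : ℕ := n + 1 with hNdef
    have hN : (0:ℝ) < N := by positivity
    have hNδ : 1/(N:ℝ) < δ := by exact_mod_cast hn
    set w : ℕ → unitInterval := fun i =>
      ⟨min ((i:ℝ)/N) 1, ⟨le_min (by positivity) zero_le_one, min_le_right _ _⟩⟩ with hw
    have hwmono : Monotone w := fun i j hij => Subtype.mk_le_mk.2
      (min_le_min ((div_le_div_iff_of_pos_right hN).2 (by exact_mod_cast hij)) le_rfl)
    have hw0 : w 0 = 0 := Subtype.ext (by simp [hw])
    have hwN : w N = 1 := Subtype.ext (by simp [hw, div_self hN.ne'])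
    have hwdist : ∀ i, dist (w (i+1)) (w i) < δ := by
      intro i
      rw [Subtype.dist_eq, Real.dist_eq]
      simp only [hw]
      rw [min_comm ((((i:ℕ)+1:ℕ):ℝ)/N) 1, min_comm ((i:ℝ)/N) 1]
      refine lt_of_le_of_lt (min_lip 1 _ _) ?_
      rw [show (((i+1:ℕ)):ℝ)/N - (i:ℝ)/N = 1/N by push_cast; ring]
      rwa [abs_of_pos (by positivity)]
    set Δ : ℕ → ℝ := fun i => g (w (i+1), t₀) - g (w i, t₀) with hΔ
    have hΔsmall : ∀ i, |Δ i| ≤ ε := by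
      intro i
      refine le_of_lt ?_
      have hd : dist ((w (i+1), t₀) : unitInterval × unitInterval) (w i, t₀) < δ := by
        rw [Prod.dist_eq]
        simp only [dist_self]
        exact max_lt (hwdist i) hδ
      have := hδ' hd
      rwa [Real.dist_eq] at this
    have hsum : ∑ i ∈ Finset.range N, Δ i = e t₀ := by
      rw [hΔ]
      rw [Finset.sum_range_sub (fun i => g (w i, t₀))]
      rw [hwN, hw0, hg0]
      simp [he]
    have heps : (0:ℝ) ≤ 1 - ε^2/16 := by nlinarith
    have step : ∀ i ∈ Finset.range N,
        ENNReal.ofReal ((1 - ε^2/16) * |Δ i|) ≤ edist (F (w (i+1))) (F (w i)) := by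
      intro i _
      rw [edist_dist]
      refine ENNReal.ofReal_le_ofReal (le_trans ?_ (ContinuousMap.dist_apply_le_dist t₀))
      rw [show F (w (i+1)) t₀ = Circle.exp (g (w (i+1), t₀)) by rw [hge]; rfl,
        show F (w i) t₀ = Circle.exp (g (w i, t₀)) by rw [hge]; rfl,
        circle_dist_exp]
      exact two_sin_half_ge (le_trans (hΔsmall i) hε1) (hΔsmall i)
    calc ENNReal.ofReal ((1 - ε^2/16) * |e t₀|)
        ≤ ENNReal.ofReal (∑ i ∈ Finset.range N, (1 - ε^2/16) * |Δ i|) := by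
          refine ENNReal.ofReal_le_ofReal ?_
          rw [← Finset.mul_sum]
          refine mul_le_mul_of_nonneg_left ?_ heps
          rw [← hsum]
          exact Finset.abs_sum_le_sum_abs _ _
      _ = ∑ i ∈ Finset.range N, ENNReal.ofReal ((1 - ε^2/16) * |Δ i|) :=
          ENNReal.ofReal_sum_of_nonneg fun i _ => mul_nonneg heps (abs_nonneg _)
      _ ≤ ∑ i ∈ Finset.range N, edist (F (w (i+1))) (F (w i)) :=
          Finset.sum_le_sum step
      _ ≤ eVariationOn F Set.univ := eVariationOn.sum_le (f := F) (n := N) hwmono fun i => trivial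
  -- pass to the limit
  have htend : Filter.Tendsto
      (fun j : ℕ => ENNReal.ofReal ((1 - (1/((j:ℝ)+1))^2/16) * |e t₀|))
      Filter.atTop (nhds (ENNReal.ofReal ((1 - 0^2/16) * |e t₀|))) := by
    refine (ENNReal.continuous_ofReal.tendsto _).comp ?_
    refine Filter.Tendsto.mul_const _ ?_
    refine Filter.Tendsto.sub tendsto_const_nhds ?_
    exact (tendsto_one_div_add_atTop_nhds_zero_nat.pow 2).div_const 16
  rw [show ((1:ℝ) - 0^2/16) * |e t₀| = |e t₀| by norm_num] at htend
  refine le_of_tendsto htend (Filter.Eventually.of_forall fun j => ?_)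
  refine core _ (by positivity) ?_
  rw [div_le_one (by positivity)]
  linarith [Nat.cast_nonneg (α := ℝ) j]

/-- For `u(t) = exp(iαt)` in `C([0,1])`, the infimum of lengths of rectifiable paths of
unitaries from `1` to `u` equals `min_{k ∈ ℤ} max_{t ∈ [0,1]} |αt − 2kπ|`. -/
theorem cel_exp_eq_min_max (α : ℝ)
    (u : C(unitInterval, Circle)) (hu : ∀ t : unitInterval, u t = Circle.exp (α * t)) :
    celCircle u = ENNReal.ofReal (⨅ k : ℤ, ⨆ t : unitInterval, |α * t - 2 * k * π|) := by
  set f : ℤ → ℝ := fun k => ⨆ t : unitInterval, |α * t - 2 * k * π| with hf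
  have hbddA : ∀ k : ℤ, BddAbove (Set.range fun t : unitInterval => |α * t - 2 * k * π|) := by
    intro k
    refine ⟨|α| + |2 * (k:ℝ) * π|, ?_⟩
    rintro x ⟨t, rfl⟩
    refine le_trans (abs_sub _ _) (add_le_add ?_ le_rfl)
    rw [abs_mul]
    calc |α| * |(t:ℝ)| ≤ |α| * 1 := by
          refine mul_le_mul_of_nonneg_left ?_ (abs_nonneg α)
          rw [_root_.abs_of_nonneg t.2.1]; exact t.2.2
      _ = |α| := mul_one _
  have hf_nonneg : ∀ k, 0 ≤ f k :=
    fun k => le_trans (abs_nonneg _) (le_ciSup (hbddA k) 0)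
  have hfbddB : BddBelow (Set.range f) := ⟨0, by rintro x ⟨k, rfl⟩; exact hf_nonneg k⟩
  refine le_antisymm ?_ ?_
  · refine ENNReal.le_of_forall_pos_le_add fun ε hε _ => ?_
    have hlt : ⨅ k, f k < (⨅ k, f k) + ε := lt_add_of_pos_right _ (by exact_mod_cast hε)
    obtain ⟨k, hk⟩ := exists_lt_of_ciInf_lt hlt
    refine le_trans (upper_bound α u hu k (f k) (hf_nonneg k) fun t => le_ciSup (hbddA k) t) ?_
    calc ENNReal.ofReal (f k) ≤ ENNReal.ofReal ((⨅ k, f k) + ε) :=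
          ENNReal.ofReal_le_ofReal hk.le
      _ ≤ ENNReal.ofReal (⨅ k, f k) + ENNReal.ofReal ε := ENNReal.ofReal_add_le
      _ = ENNReal.ofReal (⨅ k, f k) + ε := by rw [ENNReal.ofReal_coe_nnreal]
  · rw [celCircle]
    refine le_iInf fun F => le_iInf fun hFc => le_iInf fun hF0 => le_iInf fun hF1 => ?_
    obtain ⟨k, hk⟩ := lower_bound α u hu hFc hF0 hF1
    refine le_trans (ENNReal.ofReal_le_ofReal (ciInf_le hfbddB k)) hk
end

section
/- Let Y be a metric space and let X ⊂ Y^k be the set of k-tuples (y₁,…,y_k) with pairwise distinct entries. Then the restriction to X of the quotient map π : Y^k → P^k Y (the k-fold symmetric product) is a covering map onto its image. -/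
/-- The permutation relation on `k`-tuples: two tuples are related iff one is a
permutation of the other.  The `k`-fold symmetric product `P^k Y` is the quotient
`Quot (permRel Y k)`, with the quotient topology. -/
def permRel (Y : Type*) (k : ℕ) (a b : Fin k → Y) : Prop :=
  ∃ σ : Equiv.Perm (Fin k), a = b ∘ σ

namespace SymProdAux

open Metric Set Topology

variable {Y : Type*} [MetricSpace Y] {k : ℕ}

theorem permRel_equivalence (Y : Type*) (k : ℕ) : Equivalence (permRel Y k) where
  refl a := ⟨1, by funext i; rfl⟩
  symm := by
    rintro a b ⟨σ, rfl⟩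
    exact ⟨σ⁻¹, by funext i; simp⟩
  trans := by
    rintro a b c ⟨σ, rfl⟩ ⟨τ, rfl⟩
    exact ⟨τ * σ, by funext i; simp⟩

theorem quot_mk_eq_iff {a b : Fin k → Y} :
    Quot.mk (permRel Y k) a = Quot.mk (permRel Y k) b ↔ ∃ σ : Equiv.Perm (Fin k), a = b ∘ σ := by
  rw [Quot.eq, (permRel_equivalence Y k).eqvGen_iff]
  rfl

theorem continuous_comp_perm (σ : Equiv.Perm (Fin k)) :
    Continuous fun c : Fin k → Y => c ∘ ⇑σ :=
  continuous_pi fun i => continuous_apply (σ i)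

theorem isOpenMap_quot_mk : IsOpenMap (Quot.mk (permRel Y k)) := by
  intro W hW
  rw [← isQuotientMap_quot_mk.isOpen_preimage]
  have h : Quot.mk (permRel Y k) ⁻¹' (Quot.mk (permRel Y k) '' W) =
      ⋃ σ : Equiv.Perm (Fin k), (fun c : Fin k → Y => c ∘ ⇑σ) ⁻¹' W := by
    ext c
    simp only [mem_preimage, mem_image, mem_iUnion]
    constructor
    · rintro ⟨b, hb, hbc⟩
      obtain ⟨σ, rfl⟩ := quot_mk_eq_iff.mp hbc
      exact ⟨σ, hb⟩
    · rintro ⟨σ, hσ⟩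
      exact ⟨c ∘ ⇑σ, hσ, quot_mk_eq_iff.mpr ⟨σ, rfl⟩⟩
  rw [h]
  exact isOpen_iUnion fun σ => hW.preimage (continuous_comp_perm σ)

variable {a₀ : Fin k → Y} {ε : ℝ}

theorem mem_ball_pi_iff (hε : 0 < ε) {b : Fin k → Y} :
    b ∈ ball a₀ ε ↔ ∀ i, dist (b i) (a₀ i) < ε := by
  rw [mem_ball, dist_pi_lt_iff hε]

theorem inj_of_mem (hε : 0 < ε)
    (hsep : ∀ i j, i ≠ j → 3 * ε ≤ dist (a₀ i) (a₀ j)) {b : Fin k → Y}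
    (hb : b ∈ ball a₀ ε) : Function.Injective b := by
  intro i j hij
  by_contra hne
  have h1 := (mem_ball_pi_iff hε).mp hb i
  have h2 := (mem_ball_pi_iff hε).mp hb j
  have h3 := hsep i j hne
  have h4 : dist (a₀ i) (a₀ j) ≤ dist (a₀ i) (b i) + dist (b i) (a₀ j) := dist_triangle _ _ _
  have hb' : dist (b i) (a₀ j) = dist (b j) (a₀ j) := by rw [hij]
  have hcomm : dist (a₀ i) (b i) = dist (b i) (a₀ i) := dist_comm _ _
  linarith

theorem perm_unique (hε : 0 < ε)
    (hsep : ∀ i j, i ≠ j → 3 * ε ≤ dist (a₀ i) (a₀ j)) {b : Fin k → Y}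
    {σ τ : Equiv.Perm (Fin k)} (hσ : b ∘ ⇑σ ∈ ball a₀ ε) (hτ : b ∘ ⇑τ ∈ ball a₀ ε) :
    σ = τ := by
  have key : ∀ i, τ⁻¹ (σ i) = i := by
    intro i
    by_contra hne
    have h1 := (mem_ball_pi_iff hε).mp hσ i
    have h2 := (mem_ball_pi_iff hε).mp hτ (τ⁻¹ (σ i))
    have h3 := hsep i (τ⁻¹ (σ i)) (fun h => hne h.symm)
    have he : (b ∘ ⇑τ) (τ⁻¹ (σ i)) = (b ∘ ⇑σ) i := by
      simp [Function.comp]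
    rw [he] at h2
    have h4 : dist (a₀ i) (a₀ (τ⁻¹ (σ i))) ≤
        dist (a₀ i) ((b ∘ ⇑σ) i) + dist ((b ∘ ⇑σ) i) (a₀ (τ⁻¹ (σ i))) := dist_triangle _ _ _
    have h5 : dist (a₀ i) ((b ∘ ⇑σ) i) = dist ((b ∘ ⇑σ) i) (a₀ i) := dist_comm _ _
    linarith
  apply Equiv.ext
  intro i
  have h := congrArg τ (key i)
  simpa using h

theorem quot_injOn (hε : 0 < ε)
    (hsep : ∀ i j, i ≠ j → 3 * ε ≤ dist (a₀ i) (a₀ j)) {b c : Fin k → Y}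
    (hb : b ∈ ball a₀ ε) (hc : c ∈ ball a₀ ε)
    (h : Quot.mk (permRel Y k) b = Quot.mk (permRel Y k) c) : b = c := by
  obtain ⟨σ, rfl⟩ := quot_mk_eq_iff.mp h
  have h1 : c ∘ ⇑(1 : Equiv.Perm (Fin k)) ∈ ball a₀ ε := by
    simpa [Function.comp] using hc
  have := perm_unique hε hsep hb h1
  subst this
  funext i; rfl

theorem exists_eps {a₀ : Fin k → Y} (ha : Function.Injective a₀) :
    ∃ ε : ℝ, 0 < ε ∧ ∀ i j, i ≠ j → 3 * ε ≤ dist (a₀ i) (a₀ j) := by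
  classical
  set S : Finset (Fin k × Fin k) := Finset.univ.filter (fun p => p.1 ≠ p.2) with hS
  by_cases hne : S.Nonempty
  · set m := S.inf' hne (fun p => dist (a₀ p.1) (a₀ p.2)) with hm
    have hmpos : 0 < m := by
      rw [hm, Finset.lt_inf'_iff]
      intro p hp
      have : p.1 ≠ p.2 := by
        have := Finset.mem_filter.mp hp
        exact this.2
      exact dist_pos.mpr fun h => this (ha h)
    refine ⟨m / 3, by linarith, fun i j hij => ?_⟩
    have hmem : ((i, j) : Fin k × Fin k) ∈ S := by simp [hS, hij]
    have : m ≤ dist (a₀ i) (a₀ j) := Finset.inf'_le (fun p => dist (a₀ p.1) (a₀ p.2)) hmem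
    linarith
  · refine ⟨1, one_pos, fun i j hij => absurd ?_ hne⟩
    exact ⟨(i, j), by simp [hS, hij]⟩

/-- The restricted quotient map, as a function to the range. -/
def sympi (Y : Type*) [MetricSpace Y] (k : ℕ) :
    {a : Fin k → Y // Function.Injective a} →
      Set.range (fun a : {a : Fin k → Y // Function.Injective a} =>
        Quot.mk (permRel Y k) a.1) :=
  fun a => ⟨Quot.mk (permRel Y k) a.1, a, rfl⟩

theorem continuous_sympi : Continuous (sympi Y k) :=
  Continuous.subtype_mk (continuous_quot_mk.comp continuous_subtype_val) _

open Classical in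
noncomputable def rep (a₀ : Fin k → Y) (ε : ℝ)
    (x : Set.range (fun a : {a : Fin k → Y // Function.Injective a} =>
      Quot.mk (permRel Y k) a.1)) : Fin k → Y :=
  if h : ∃ b, b ∈ ball a₀ ε ∧ Quot.mk (permRel Y k) b = x.1 then h.choose
  else (Set.mem_range.mp x.2).choose.1

theorem rep_spec {x : Set.range (fun a : {a : Fin k → Y // Function.Injective a} =>
      Quot.mk (permRel Y k) a.1)}
    (h : ∃ b, b ∈ ball a₀ ε ∧ Quot.mk (permRel Y k) b = x.1) :
    rep a₀ ε x ∈ ball a₀ ε ∧ Quot.mk (permRel Y k) (rep a₀ ε x) = x.1 := by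
  rw [rep, dif_pos h]
  exact h.choose_spec

theorem rep_eq (hε : 0 < ε)
    (hsep : ∀ i j, i ≠ j → 3 * ε ≤ dist (a₀ i) (a₀ j))
    {x : Set.range (fun a : {a : Fin k → Y // Function.Injective a} =>
      Quot.mk (permRel Y k) a.1)}
    {c : Fin k → Y} (hc : c ∈ ball a₀ ε) (hcx : Quot.mk (permRel Y k) c = x.1) :
    rep a₀ ε x = c := by
  have h : ∃ b, b ∈ ball a₀ ε ∧ Quot.mk (permRel Y k) b = x.1 := ⟨c, hc, hcx⟩
  have hs := rep_spec h
  exact quot_injOn hε hsep hs.1 hc (by rw [hs.2, hcx])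

theorem continuousOn_rep (hε : 0 < ε)
    (hsep : ∀ i j, i ≠ j → 3 * ε ≤ dist (a₀ i) (a₀ j)) :
    ContinuousOn (rep a₀ ε)
      (Subtype.val ⁻¹' (Quot.mk (permRel Y k) '' ball a₀ ε)) := by
  rw [_root_.continuousOn_iff]
  intro x hx W hW hxW
  obtain ⟨b, hb, hbx⟩ := hx
  have hcond : ∃ b, b ∈ ball a₀ ε ∧ Quot.mk (permRel Y k) b = x.1 := ⟨b, hb, hbx⟩
  have hs := rep_spec hcond
  refine ⟨Subtype.val ⁻¹' (Quot.mk (permRel Y k) '' (W ∩ ball a₀ ε)),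
    (isOpenMap_quot_mk _ (hW.inter isOpen_ball)).preimage continuous_subtype_val,
    ⟨rep a₀ ε x, ⟨hxW, hs.1⟩, hs.2⟩, ?_⟩
  rintro y ⟨⟨c, ⟨hcW, hcb⟩, hcy⟩, -⟩
  have : rep a₀ ε y = c := rep_eq hε hsep hcb hcy
  simpa [this] using hcW

variable [TopologicalSpace (Equiv.Perm (Fin k))] [DiscreteTopology (Equiv.Perm (Fin k))]

set_option maxHeartbeats 1000000 in
open Classical in
noncomputable def triv (a₀ : Fin k → Y) (hε : 0 < ε)
    (hsep : ∀ i j, i ≠ j → 3 * ε ≤ dist (a₀ i) (a₀ j)) :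
    Bundle.Trivialization (Equiv.Perm (Fin k)) (sympi Y k) where
  toFun a := (sympi Y k a,
    if h : ∃ σ : Equiv.Perm (Fin k), a.1 ∘ ⇑σ ∈ ball a₀ ε then h.choose else 1)
  invFun p :=
    if h : ∃ b, b ∈ ball a₀ ε ∧ Quot.mk (permRel Y k) b = p.1.1 then
      ⟨rep a₀ ε p.1 ∘ ⇑(p.2⁻¹),
        ((inj_of_mem hε hsep (rep_spec h).1).comp (Equiv.injective _))⟩
    else (Set.mem_range.mp p.1.2).choose
  source := sympi Y k ⁻¹' (Subtype.val ⁻¹' (Quot.mk (permRel Y k) '' ball a₀ ε))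
  target := (Subtype.val ⁻¹' (Quot.mk (permRel Y k) '' ball a₀ ε)) ×ˢ Set.univ
  map_source' := by intro a ha; exact ⟨ha, Set.mem_univ _⟩
  map_target' := by
    rintro ⟨x, σ⟩ ⟨hx, -⟩
    obtain ⟨b, hb, hbx⟩ := hx
    have hcond : ∃ b, b ∈ ball a₀ ε ∧ Quot.mk (permRel Y k) b = x.1 := ⟨b, hb, hbx⟩
    have hs := rep_spec (a₀ := a₀) (ε := ε) hcond
    simp only [dif_pos hcond]
    show Quot.mk (permRel Y k) (rep a₀ ε x ∘ ⇑σ⁻¹) ∈ Quot.mk (permRel Y k) '' ball a₀ ε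
    exact ⟨rep a₀ ε x, hs.1, (quot_mk_eq_iff.mpr ⟨σ⁻¹, rfl⟩).symm⟩
  left_inv' := by
    intro a ha
    obtain ⟨b, hb, hba⟩ := ha
    obtain ⟨σ₀, hσ₀⟩ := quot_mk_eq_iff.mp hba
    subst hσ₀
    have hex : ∃ σ : Equiv.Perm (Fin k), a.1 ∘ ⇑σ ∈ ball a₀ ε := ⟨σ₀, hb⟩
    simp only [dif_pos hex]
    have hcs : a.1 ∘ ⇑hex.choose ∈ ball a₀ ε := hex.choose_spec
    have hcond : ∃ b, b ∈ ball a₀ ε ∧ Quot.mk (permRel Y k) b = (sympi Y k a).1 :=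
      ⟨a.1 ∘ ⇑hex.choose, hcs, quot_mk_eq_iff.mpr ⟨hex.choose, rfl⟩⟩
    simp only [dif_pos hcond]
    have hr : rep a₀ ε (sympi Y k a) = a.1 ∘ ⇑hex.choose :=
      rep_eq hε hsep hcs (quot_mk_eq_iff.mpr ⟨hex.choose, rfl⟩)
    apply Subtype.ext
    show rep a₀ ε (sympi Y k a) ∘ ⇑hex.choose⁻¹ = a.1
    rw [hr]
    funext i
    simp [Function.comp]
  right_inv' := by
    rintro ⟨x, σ⟩ ⟨hx, -⟩
    obtain ⟨b, hb, hbx⟩ := hx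
    have hcond : ∃ b, b ∈ ball a₀ ε ∧ Quot.mk (permRel Y k) b = x.1 := ⟨b, hb, hbx⟩
    have hs := rep_spec (a₀ := a₀) (ε := ε) hcond
    simp only [dif_pos hcond]
    have hmem : (rep a₀ ε x ∘ ⇑σ⁻¹) ∘ ⇑σ ∈ ball a₀ ε := by
      have : (rep a₀ ε x ∘ ⇑σ⁻¹) ∘ ⇑σ = rep a₀ ε x := by
        funext i; simp [Function.comp]
      rw [this]; exact hs.1
    have hex : ∃ τ : Equiv.Perm (Fin k),
        (rep a₀ ε x ∘ ⇑σ⁻¹) ∘ ⇑τ ∈ ball a₀ ε := ⟨σ, hmem⟩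
    refine Prod.ext ?_ ?_
    · apply Subtype.ext
      show Quot.mk (permRel Y k) (rep a₀ ε x ∘ ⇑σ⁻¹) = x.1
      rw [← hs.2]
      exact quot_mk_eq_iff.mpr ⟨σ⁻¹, rfl⟩
    · show (if h : ∃ τ : Equiv.Perm (Fin k), (rep a₀ ε x ∘ ⇑σ⁻¹) ∘ ⇑τ ∈ ball a₀ ε
        then h.choose else 1) = σ
      rw [dif_pos hex]
      exact perm_unique hε hsep hex.choose_spec hmem
  open_source :=
    ((isOpenMap_quot_mk _ isOpen_ball).preimage continuous_subtype_val).preimage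
      continuous_sympi
  open_target :=
    ((isOpenMap_quot_mk _ isOpen_ball).preimage continuous_subtype_val).prod isOpen_univ
  continuousOn_toFun := by
    apply ContinuousOn.prodMk continuous_sympi.continuousOn
    intro a ha
    obtain ⟨b, hb, hba⟩ := ha
    obtain ⟨σ₀, hσ₀⟩ := quot_mk_eq_iff.mp hba
    apply ContinuousAt.continuousWithinAt
    have hN : IsOpen {c : {a : Fin k → Y // Function.Injective a} | c.1 ∘ ⇑σ₀ ∈ ball a₀ ε} :=
      isOpen_ball.preimage ((continuous_comp_perm σ₀).comp continuous_subtype_val)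
    have haN : a ∈ {c : {a : Fin k → Y // Function.Injective a} | c.1 ∘ ⇑σ₀ ∈ ball a₀ ε} :=
      show a.1 ∘ ⇑σ₀ ∈ ball a₀ ε from hσ₀ ▸ hb
    apply continuousAt_const.congr
    apply Filter.eventuallyEq_of_mem (hN.mem_nhds haN)
    intro c hc
    have hex : ∃ σ : Equiv.Perm (Fin k), c.1 ∘ ⇑σ ∈ ball a₀ ε := ⟨σ₀, hc⟩
    simp only [dif_pos hex]
    exact (perm_unique hε hsep hex.choose_spec hc).symm
  continuousOn_invFun := by
    rw [(⟨rfl⟩ : IsInducing (Subtype.val : {a : Fin k → Y // Function.Injective a} → Fin k → Y)).continuousOn_iff]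
    intro p hp
    obtain ⟨hp1, -⟩ := hp
    set σ := p.2 with hσdef
    have hrep := continuousOn_rep (a₀ := a₀) hε hsep
    have hg : ContinuousOn
        (fun q : (Set.range (fun a : {a : Fin k → Y // Function.Injective a} =>
            Quot.mk (permRel Y k) a.1)) × Equiv.Perm (Fin k) =>
          rep a₀ ε q.1 ∘ ⇑σ⁻¹)
        ((Subtype.val ⁻¹' (Quot.mk (permRel Y k) '' ball a₀ ε)) ×ˢ Set.univ) := by
      apply (continuous_comp_perm σ⁻¹).comp_continuousOn
      exact hrep.comp continuousOn_fst fun q hq => hq.1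
    have hcw := hg.continuousWithinAt ⟨hp1, Set.mem_univ _⟩
    apply hcw.congr_of_eventuallyEq
    · have hT : (Set.univ ×ˢ ({σ} : Set (Equiv.Perm (Fin k)))) ∩
          ((Subtype.val ⁻¹' (Quot.mk (permRel Y k) '' ball a₀ ε)) ×ˢ Set.univ) ∈
          nhdsWithin p ((Subtype.val ⁻¹' (Quot.mk (permRel Y k) '' ball a₀ ε)) ×ˢ Set.univ) := by
        apply Filter.inter_mem _ self_mem_nhdsWithin
        apply mem_nhdsWithin_of_mem_nhds
        exact prod_mem_nhds Filter.univ_mem ((isOpen_discrete {σ}).mem_nhds rfl)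
      apply Filter.eventuallyEq_of_mem hT
      rintro ⟨x, τ⟩ ⟨⟨-, hτ⟩, ⟨hx, -⟩⟩
      have hτσ : τ = σ := hτ
      obtain ⟨b, hb, hbx⟩ := hx
      have hcond : ∃ b, b ∈ ball a₀ ε ∧ Quot.mk (permRel Y k) b = x.1 := ⟨b, hb, hbx⟩
      show (Subtype.val ∘ _) _ = _
      simp only [Function.comp_apply, dif_pos hcond]
      rw [hτσ]
    · obtain ⟨b, hb, hbx⟩ := hp1
      have hcond : ∃ b, b ∈ ball a₀ ε ∧ Quot.mk (permRel Y k) b = p.1.1 := ⟨b, hb, hbx⟩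
      show (Subtype.val ∘ _) _ = _
      simp only [Function.comp_apply, dif_pos hcond]
      rfl
  baseSet := Subtype.val ⁻¹' (Quot.mk (permRel Y k) '' ball a₀ ε)
  open_baseSet := (isOpenMap_quot_mk _ isOpen_ball).preimage continuous_subtype_val
  source_eq := rfl
  target_eq := rfl
  proj_toFun := fun a _ => rfl

end SymProdAux

/-- Let `X ⊆ Y^k` be the set of tuples with pairwise distinct entries.  The restriction to
`X` of the quotient map `π : Y^k → P^k Y` is a covering map onto its image. -/
theorem isCoveringMap_symmetricProduct (Y : Type*) [MetricSpace Y] (k : ℕ) :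
    IsCoveringMap (fun a : {a : Fin k → Y // Function.Injective a} =>
      (⟨Quot.mk (permRel Y k) a.1, a, rfl⟩ :
        Set.range (fun a : {a : Fin k → Y // Function.Injective a} =>
          Quot.mk (permRel Y k) a.1))) := by
  classical
  letI : TopologicalSpace (Equiv.Perm (Fin k)) := ⊥
  haveI : DiscreteTopology (Equiv.Perm (Fin k)) := ⟨rfl⟩
  intro x
  obtain ⟨a₀, ha₀⟩ := x.2
  obtain ⟨ε, hε, hsep⟩ := SymProdAux.exists_eps a₀.2
  refine IsEvenlyCovered.to_isEvenlyCovered_preimage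
    (I := Equiv.Perm (Fin k)) (IsEvenlyCovered.of_trivialization (t := SymProdAux.triv a₀.1 hε hsep) ?_)
  exact ⟨a₀.1, Metric.mem_ball_self hε, ha₀⟩
end

section
/- Let s ↦ F_s be a continuous path in the unitary group of M_n(C[0,1]), and suppose there are continuous functions f¹, f², …, f^n : [0,1]×[0,1] → S¹ such that for every (s,t), the multiset {f^1_s(t),…,f^n_s(t)} is exactly the multiset of eigenvalues of F_s(t), with f^i_s(t) ≠ f^j_s(t) whenever i ≠ j. Then length(s ↦ F_s) ≥ max over 1 ≤ j ≤ n of length(s ↦ f^j_s), where f^j_s is regarded as a unitary in C[0,1]. -/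
open scoped Matrix.Norms.L2Operator ENNReal

/-- For a continuous function `f` on the square and `s ∈ [0,1]`, the sliceAt `t ↦ f(s,t)`,
viewed as an element of `C([0,1], ℂ)`. -/
noncomputable def sliceAt (f : C(unitInterval × unitInterval, ℂ)) (s : unitInterval) :
    C(unitInterval, ℂ) :=
  f.comp ⟨fun t => (s, t), by continuity⟩


open Matrix in
lemma unitary_mulVec_norm {n : ℕ} {P : Matrix (Fin n) (Fin n) ℂ}
    (hP : P ∈ Matrix.unitaryGroup (Fin n) ℂ) (v : EuclideanSpace ℂ (Fin n)) :
    ‖(EuclideanSpace.equiv (Fin n) ℂ).symm (P *ᵥ v)‖ = ‖v‖ := by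
  rcases Nat.eq_zero_or_pos n with h0 | h0
  · subst h0
    have : Subsingleton (EuclideanSpace ℂ (Fin 0)) := inferInstance
    rw [Subsingleton.elim ((EuclideanSpace.equiv (Fin 0) ℂ).symm (P *ᵥ v)) 0,
      Subsingleton.elim v 0]
  · have : Nontrivial (Matrix (Fin n) (Fin n) ℂ) := by
      have : Nonempty (Fin n) := ⟨⟨0, h0⟩⟩
      infer_instance
    have hPn : ‖P‖ = 1 := CStarRing.norm_of_mem_unitary hP
    have hPsn : ‖star P‖ = 1 := CStarRing.norm_of_mem_unitary (Unitary.star_mem hP)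
    have h1 : ‖(EuclideanSpace.equiv (Fin n) ℂ).symm (P *ᵥ v)‖ ≤ ‖v‖ := by
      have := Matrix.l2_opNorm_mulVec P v
      rwa [hPn, one_mul] at this
    have h2 : ‖v‖ ≤ ‖(EuclideanSpace.equiv (Fin n) ℂ).symm (P *ᵥ v)‖ := by
      have key : star P *ᵥ (P *ᵥ (v : Fin n → ℂ)) = v := by
        rw [Matrix.mulVec_mulVec, (Matrix.mem_unitaryGroup_iff'.mp hP : star P * P = 1),
          Matrix.one_mulVec]
      have := Matrix.l2_opNorm_mulVec (star P)
        ((EuclideanSpace.equiv (Fin n) ℂ).symm (P *ᵥ v))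
      rw [hPsn, one_mul] at this
      have heq : (EuclideanSpace.equiv (Fin n) ℂ).symm
          (star P *ᵥ ((EuclideanSpace.equiv (Fin n) ℂ).symm (P *ᵥ v) : Fin n → ℂ)) = v := by
        ext i
        have : ((EuclideanSpace.equiv (Fin n) ℂ).symm (P *ᵥ v) : Fin n → ℂ) = P *ᵥ v := rfl
        rw [this, key]
        rfl
      rwa [heq] at this
    exact le_antisymm h1 h2

open Matrix in
lemma eig_perturb {n : ℕ} {A B P Q : Matrix (Fin n) (Fin n) ℂ}
    (hP : P ∈ Matrix.unitaryGroup (Fin n) ℂ) (hQ : Q ∈ Matrix.unitaryGroup (Fin n) ℂ)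
    {d e : Fin n → ℂ}
    (hA : A = P * Matrix.diagonal d * star P) (hB : B = Q * Matrix.diagonal e * star Q)
    (j : Fin n) : ∃ i, ‖e j - d i‖ ≤ ‖A - B‖ := by
  classical
  set e2 : (Fin n → ℂ) → EuclideanSpace ℂ (Fin n) := fun v => (EuclideanSpace.equiv (Fin n) ℂ).symm v with he2
  have e2_apply : ∀ (v : Fin n → ℂ) (i : Fin n), e2 v i = v i := fun v i => rfl
  set q : Fin n → ℂ := Q *ᵥ Pi.single j 1 with hqdef
  have hsingle : e2 (Pi.single j 1) = EuclideanSpace.single j (1:ℂ) := rfl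
  have hqn : ‖e2 q‖ = 1 := by
    have h : ‖e2 q‖ = ‖e2 (Pi.single j 1)‖ := unitary_mulVec_norm hQ (e2 (Pi.single j 1))
    rw [h, hsingle, EuclideanSpace.norm_single, norm_one]
  have hQ1 : star Q * Q = 1 := Matrix.mem_unitaryGroup_iff'.mp hQ
  have hP2 : P * star P = 1 := Matrix.mem_unitaryGroup_iff.mp hP
  have hBq : B *ᵥ q = e j • q := by
    have h1 : (Matrix.diagonal e) *ᵥ (Pi.single j 1) = e j • (Pi.single j (1:ℂ) : Fin n → ℂ) := by
      rw [Matrix.diagonal_mulVec_single, mul_one]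
      funext i
      simp [Pi.single_apply, mul_ite]
    rw [hB, hqdef, Matrix.mulVec_mulVec, mul_assoc, hQ1, mul_one,
      ← Matrix.mulVec_mulVec, h1, Matrix.mulVec_smul]
  set c : Fin n → ℂ := fun i => d i - e j with hc
  have expand : P * Matrix.diagonal c * star P = A - e j • 1 := by
    have hdg : Matrix.diagonal c = Matrix.diagonal d - e j • (1 : Matrix (Fin n) (Fin n) ℂ) := by
      ext i k
      by_cases h : i = k
      · subst h
        simp [hc, Matrix.one_apply_eq]
      · simp [Matrix.diagonal_apply_ne _ h, Matrix.one_apply_ne h]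
    rw [hdg, mul_sub, sub_mul, hA, mul_smul_comm, mul_one, smul_mul_assoc, hP2]
  have hkey : (A - B) *ᵥ q = (P * Matrix.diagonal c * star P) *ᵥ q := by
    rw [expand, Matrix.sub_mulVec, Matrix.sub_mulVec, hBq, Matrix.smul_mulVec,
      Matrix.one_mulVec]
  set w : Fin n → ℂ := star P *ᵥ q with hw
  have hwn : ‖e2 w‖ = 1 := by
    have h : ‖e2 w‖ = ‖e2 q‖ := unitary_mulVec_norm (Unitary.star_mem hP) (e2 q)
    rw [h, hqn]
  have hPDw : (P * Matrix.diagonal c * star P) *ᵥ q = P *ᵥ (Matrix.diagonal c *ᵥ w) := by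
    simp only [hw, Matrix.mulVec_mulVec, mul_assoc]
  obtain ⟨i₀, -, hi₀⟩ := Finset.exists_min_image Finset.univ (fun i => ‖c i‖)
    ⟨j, Finset.mem_univ j⟩
  refine ⟨i₀, ?_⟩
  have hnorm_eq : ‖e2 ((A - B) *ᵥ q)‖ = ‖e2 (Matrix.diagonal c *ᵥ w)‖ := by
    rw [hkey, hPDw]
    exact unitary_mulVec_norm hP (e2 (Matrix.diagonal c *ᵥ w))
  have upper : ‖e2 ((A - B) *ᵥ q)‖ ≤ ‖A - B‖ := by
    have h := Matrix.l2_opNorm_mulVec (A - B) (e2 q)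
    rw [hqn, mul_one] at h
    exact h
  have lower : ‖c i₀‖ ≤ ‖e2 (Matrix.diagonal c *ᵥ w)‖ := by
    have hs : ‖e2 (Matrix.diagonal c *ᵥ w)‖ = Real.sqrt (∑ i, ‖c i * w i‖ ^ 2) := by
      rw [EuclideanSpace.norm_eq]
      congr 1
      refine Finset.sum_congr rfl fun i _ => ?_
      rw [e2_apply, Matrix.mulVec_diagonal]
    have hww : ‖e2 w‖ = Real.sqrt (∑ i, ‖w i‖ ^ 2) := by
      rw [EuclideanSpace.norm_eq]
      rfl
    calc ‖c i₀‖ = ‖c i₀‖ * ‖e2 w‖ := by rw [hwn, mul_one]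
      _ = Real.sqrt (∑ i, ‖c i₀‖ ^ 2 * ‖w i‖ ^ 2) := by
          rw [hww, show ‖c i₀‖ * Real.sqrt (∑ i, ‖w i‖ ^ 2)
              = Real.sqrt (‖c i₀‖ ^ 2 * ∑ i, ‖w i‖ ^ 2) by
            rw [Real.sqrt_mul (by positivity), Real.sqrt_sq (norm_nonneg _)],
            Finset.mul_sum]
      _ ≤ Real.sqrt (∑ i, ‖c i * w i‖ ^ 2) := by
          apply Real.sqrt_le_sqrt
          apply Finset.sum_le_sum
          intro i _
          rw [norm_mul, mul_pow]
          gcongr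
          exact hi₀ i (Finset.mem_univ i)
      _ = ‖e2 (Matrix.diagonal c *ᵥ w)‖ := hs.symm
  have : ‖e j - d i₀‖ = ‖c i₀‖ := by rw [hc]; exact (norm_sub_rev _ _)
  rw [this]
  exact le_trans lower (le_trans (le_of_eq hnorm_eq.symm) upper)

lemma evar_le_of_small {E E' : Type*} [PseudoEMetricSpace E] [PseudoEMetricSpace E']
    (g : unitInterval → E) (F : unitInterval → E') {η : ℝ} (hη : 0 < η)
    (key : ∀ a b : unitInterval, a ≤ b → (b:ℝ) - a ≤ η → edist (g a) (g b) ≤ edist (F a) (F b)) :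
    eVariationOn g Set.univ ≤ eVariationOn F Set.univ := by
  have step : ∀ a b : unitInterval, a ≤ b →
      edist (g a) (g b) ≤ eVariationOn F (Set.Icc a b) := by
    intro a b hab
    have hΔ : 0 ≤ (b:ℝ) - a := sub_nonneg.mpr (Subtype.coe_le_coe.mpr hab)
    obtain ⟨K, hK⟩ := exists_nat_ge (((b:ℝ) - a)/η)
    have hKpos : (0:ℝ) < ((K + 1 : ℕ) : ℝ) := by positivity
    have hstep : ((b:ℝ) - a) / ((K + 1 : ℕ) : ℝ) ≤ η := by
      rw [div_le_iff₀ hKpos]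
      have h1 : (b:ℝ) - a ≤ K * η := by
        have := (div_le_iff₀ hη).mp hK
        linarith
      have : (K:ℝ) * η ≤ ((K+1:ℕ):ℝ) * η := by
        push_cast
        nlinarith
      linarith
    have hq : (0:ℝ) ≤ ((b:ℝ) - a) / ((K + 1 : ℕ) : ℝ) := by positivity
    have hub : ∀ k : ℕ, ((min k (K+1) : ℕ) : ℝ) * (((b:ℝ) - a)/((K+1:ℕ):ℝ)) ≤ (b:ℝ) - a := by
      intro k
      have h1 : ((min k (K+1) : ℕ) : ℝ) ≤ ((K+1:ℕ):ℝ) := by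
        exact_mod_cast min_le_right k (K+1)
      have h2 : ((min k (K+1):ℕ):ℝ) * (((b:ℝ) - a)/((K+1:ℕ):ℝ))
          ≤ ((K+1:ℕ):ℝ) * (((b:ℝ) - a)/((K+1:ℕ):ℝ)) := by gcongr
      have h3 : ((K+1:ℕ):ℝ) * (((b:ℝ) - a)/((K+1:ℕ):ℝ)) = (b:ℝ) - a := by
        field_simp
      linarith
    have hval : ∀ k : ℕ,
        (a:ℝ) + ((min k (K+1) : ℕ):ℝ) * (((b:ℝ) - a)/((K+1:ℕ):ℝ)) ∈ unitInterval := by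
      intro k
      constructor
      · have h0 : 0 ≤ ((min k (K+1):ℕ):ℝ) * (((b:ℝ) - a)/((K+1:ℕ):ℝ)) := by positivity
        have := a.2.1
        linarith
      · have := b.2.2
        have := hub k
        linarith
    set v : ℕ → unitInterval := fun k => ⟨_, hval k⟩ with hv
    have hv0 : v 0 = a := by
      apply Subtype.ext
      simp [hv]
      exact Or.inl (by positivity)
    have hvK : v (K+1) = b := by
      apply Subtype.ext
      show (a:ℝ) + ((min (K+1) (K+1) : ℕ):ℝ) * (((b:ℝ) - a)/((K+1:ℕ):ℝ)) = b
      rw [min_self]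
      field_simp
      ring
    have hvmono : Monotone v := by
      intro k l hkl
      rw [← Subtype.coe_le_coe]
      show (a:ℝ) + _ ≤ (a:ℝ) + _
      have : ((min k (K+1):ℕ):ℝ) ≤ ((min l (K+1):ℕ):ℝ) := by
        exact_mod_cast Nat.cast_le.mpr (min_le_min hkl le_rfl)
      nlinarith
    have hmem : ∀ k, v k ∈ Set.Icc a b := by
      intro k
      constructor
      · rw [← hv0]; exact hvmono (Nat.zero_le k)
      · rw [← Subtype.coe_le_coe]
        show (a:ℝ) + _ ≤ (b:ℝ)
        have := hub k
        linarith
    have hgap : ∀ k, ((v (k+1) : ℝ)) - (v k : ℝ) ≤ η := by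
      intro k
      show ((a:ℝ) + _) - ((a:ℝ) + _) ≤ η
      have hd : ((min (k+1) (K+1):ℕ):ℝ) - ((min k (K+1):ℕ):ℝ) ≤ 1 := by
        have h := Nat.cast_le (α := ℝ).mpr (show min (k+1) (K+1) ≤ min k (K+1) + 1 by omega)
        push_cast at h ⊢
        linarith
      have hd0 : ((min k (K+1):ℕ):ℝ) ≤ ((min (k+1) (K+1):ℕ):ℝ) := by
        exact_mod_cast Nat.cast_le.mpr (min_le_min (Nat.le_succ k) le_rfl)
      nlinarith
    calc edist (g a) (g b) = edist (g (v 0)) (g (v (K+1))) := by rw [hv0, hvK]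
      _ ≤ ∑ i ∈ Finset.range (K+1), edist (g (v i)) (g (v (i+1))) :=
          edist_le_range_sum_edist (fun k => g (v k)) (K+1)
      _ ≤ ∑ i ∈ Finset.range (K+1), edist (F (v i)) (F (v (i+1))) := by
          refine Finset.sum_le_sum fun i _ => key (v i) (v (i+1)) (hvmono (Nat.le_succ i)) ?_
          have := hgap i
          linarith
      _ = ∑ i ∈ Finset.range (K+1), edist (F (v (i+1))) (F (v i)) := by
          simp [edist_comm]
      _ ≤ eVariationOn F (Set.Icc a b) := eVariationOn.sum_le (f := F) (n := K+1) hvmono hmem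
  have S2 : ∀ (m : ℕ) (u : ℕ → unitInterval), Monotone u →
      ∑ i ∈ Finset.range m, eVariationOn F (Set.Icc (u i) (u (i+1)))
        ≤ eVariationOn F (Set.Icc (u 0) (u m)) := by
    intro m
    induction m with
    | zero => intro u hu; simp
    | succ m ih =>
      intro u hu
      rw [Finset.sum_range_succ]
      have h1 := ih u hu
      have h2 := eVariationOn.Icc_add_Icc F (s := (Set.univ : Set unitInterval))
        (hu (Nat.zero_le m)) (hu (Nat.le_succ m)) (Set.mem_univ (u m))
      simp only [Set.univ_inter] at h2
      calc _ ≤ eVariationOn F (Set.Icc (u 0) (u m))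
            + eVariationOn F (Set.Icc (u m) (u (m+1))) := by gcongr
        _ = eVariationOn F (Set.Icc (u 0) (u (m+1))) := h2
  rw [eVariationOn]
  apply iSup_le
  rintro ⟨m, u, hu, -⟩
  calc ∑ i ∈ Finset.range m, edist (g (u (i+1))) (g (u i))
      = ∑ i ∈ Finset.range m, edist (g (u i)) (g (u (i+1))) := by simp [edist_comm]
    _ ≤ ∑ i ∈ Finset.range m, eVariationOn F (Set.Icc (u i) (u (i+1))) :=
        Finset.sum_le_sum fun i _ => step (u i) (u (i+1)) (hu (Nat.le_succ i))
    _ ≤ eVariationOn F (Set.Icc (u 0) (u m)) := S2 m u hu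
    _ ≤ eVariationOn F Set.univ := eVariationOn.mono F (Set.subset_univ _)

/-- Let `s ↦ F_s` be a continuous path of unitaries in `M_n(C[0,1])` and let
`f¹, …, fⁿ : [0,1]² → S¹` be continuous functions which, for each `(s,t)`, list the
eigenvalues of `F_s(t)` (i.e. `F_s(t)` is unitarily equivalent to
`diag(f¹_s(t),…,fⁿ_s(t))`) and are pairwise distinct at every point.  Then
`length(s ↦ F_s) ≥ max_j length(s ↦ f^j_s)`, lengths being total variations,
where `M_n(C[0,1])` carries the sup norm over `t` of the operator norm. -/
theorem length_ge_eigenvalue_length (n : ℕ)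
    (F : unitInterval → C(unitInterval, Matrix (Fin n) (Fin n) ℂ))
    (hFc : Continuous F)
    (hFu : ∀ s t, F s t ∈ Matrix.unitaryGroup (Fin n) ℂ)
    (f : Fin n → C(unitInterval × unitInterval, ℂ))
    (hdistinct : ∀ (p : unitInterval × unitInterval) (i j : Fin n), i ≠ j → f i p ≠ f j p)
    (hdiag : ∀ s t, ∃ P ∈ Matrix.unitaryGroup (Fin n) ℂ,
      F s t = P * Matrix.diagonal (fun i => f i (s, t)) * star P) :
    ∀ j : Fin n, eVariationOn (fun s => sliceAt (f j) s) Set.univ ≤ eVariationOn F Set.univ := by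
  intro j
  classical
  -- a uniform gap between distinct eigenvalue functions
  have pairmin : ∀ i i' : Fin n, ∃ δ : ℝ, 0 < δ ∧
      ∀ p : unitInterval × unitInterval, i ≠ i' → δ ≤ dist (f i p) (f i' p) := by
    intro i i'
    by_cases h : i = i'
    · exact ⟨1, one_pos, fun p hii => absurd h hii⟩
    · have hcont : Continuous fun p : unitInterval × unitInterval => dist (f i p) (f i' p) :=
        (map_continuous (f i)).dist (map_continuous (f i'))
      obtain ⟨p₀, -, hp₀⟩ := isCompact_univ.exists_isMinOn
        (Set.univ_nonempty (α := unitInterval × unitInterval)) hcont.continuousOn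
      refine ⟨dist (f i p₀) (f i' p₀), dist_pos.mpr (hdistinct p₀ i i' h), fun p _ => ?_⟩
      exact isMinOn_iff.mp hp₀ p (Set.mem_univ p)
  choose D hD1 hD2 using pairmin
  have hne : (Finset.univ : Finset (Fin n × Fin n)).Nonempty := ⟨(j, j), Finset.mem_univ _⟩
  set δ : ℝ := Finset.univ.inf' hne (fun q : Fin n × Fin n => D q.1 q.2) with hδ
  have hδpos : 0 < δ := by
    rw [hδ, Finset.lt_inf'_iff]
    exact fun q _ => hD1 q.1 q.2
  have hδle : ∀ (p : unitInterval × unitInterval) (i i' : Fin n), i ≠ i' →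
      δ ≤ dist (f i p) (f i' p) := by
    intro p i i' hii
    exact le_trans (Finset.inf'_le _ (Finset.mem_univ (i, i'))) (hD2 i i' p hii)
  -- uniform continuity of F
  obtain ⟨η, hη0, hη⟩ := Metric.uniformContinuous_iff.mp
    (CompactSpace.uniformContinuous_of_continuous hFc) (δ/4) (by positivity)
  -- the spectral perturbation bound
  have spec : ∀ (a s' t : unitInterval),
      ∃ i, dist (f j (s', t)) (f i (a, t)) ≤ dist (F a t) (F s' t) := by
    intro a s' t
    obtain ⟨P, hP, hPA⟩ := hdiag a t
    obtain ⟨Q, hQ, hQB⟩ := hdiag s' t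
    obtain ⟨i, hi⟩ := eig_perturb hP hQ (d := fun i => f i (a, t)) (e := fun i => f i (s', t))
      hPA hQB j
    exact ⟨i, by rw [dist_eq_norm, dist_eq_norm]; exact hi⟩
  -- small-step comparison
  have key : ∀ a b : unitInterval, a ≤ b → (b:ℝ) - a ≤ η/2 →
      edist (sliceAt (f j) a) (sliceAt (f j) b) ≤ edist (F a) (F b) := by
    intro a b hab hsm
    have hsmall : ∀ s' ∈ Set.Icc a b, dist (F a) (F s') ≤ δ/4 := by
      intro s' hs'
      refine le_of_lt (hη ?_)
      have h1 : (a:ℝ) ≤ s' := Subtype.coe_le_coe.mpr hs'.1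
      have h2 : (s':ℝ) ≤ b := Subtype.coe_le_coe.mpr hs'.2
      have : dist a s' = |(a:ℝ) - s'| := Subtype.dist_eq a s'
      rw [this, abs_sub_comm, abs_of_nonneg (by linarith)]
      linarith
    have hpt : ∀ t, dist (f j (a, t)) (f j (b, t)) ≤ dist (F a t) (F b t) := by
      intro t
      set h : unitInterval → ℝ := fun s' => dist (f j (a, t)) (f j (s', t)) with hh
      have hcont : Continuous h := by
        apply Continuous.dist continuous_const
        exact (map_continuous (f j)).comp (continuous_id.prodMk continuous_const)
      have dich : ∀ s' ∈ Set.Icc a b, h s' ≤ δ/4 ∨ 3*δ/4 ≤ h s' := by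
        intro s' hs'
        obtain ⟨i, hi⟩ := spec a s' t
        have hFd : dist (F a t) (F s' t) ≤ δ/4 :=
          le_trans (ContinuousMap.dist_apply_le_dist t) (hsmall s' hs')
        by_cases hij : i = j
        · left
          subst hij
          rw [hh]
          simp only
          rw [dist_comm]
          exact le_trans hi hFd
        · right
          have h1 : δ ≤ dist (f i (a, t)) (f j (a, t)) := hδle _ _ _ hij
          have tri : dist (f i (a, t)) (f j (a, t))
              ≤ dist (f i (a, t)) (f j (s', t)) + dist (f j (s', t)) (f j (a, t)) :=
            dist_triangle _ _ _
          have h2 : dist (f i (a, t)) (f j (s', t)) ≤ δ/4 := by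
            rw [dist_comm]; exact le_trans hi hFd
          have h3 : dist (f j (s', t)) (f j (a, t)) = h s' := by rw [hh]; exact dist_comm _ _
          rw [h3] at tri
          linarith
      have hallsmall : ∀ s' ∈ Set.Icc a b, h s' ≤ δ/4 := by
        intro s' hs'
        by_contra hcon
        push_neg at hcon
        have h3 : 3*δ/4 ≤ h s' := (dich s' hs').resolve_left (not_le.mpr hcon)
        set h' : ℝ → ℝ := fun x => h (Set.projIcc 0 1 zero_le_one x) with hh'
        have hcont' : Continuous h' := hcont.comp continuous_projIcc
        have hpa : h' (a:ℝ) = h a := congrArg h (Set.projIcc_val zero_le_one a)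
        have hps : h' (s':ℝ) = h s' := congrArg h (Set.projIcc_val zero_le_one s')
        have hmem : δ/2 ∈ Set.Icc (h' (a:ℝ)) (h' (s':ℝ)) := by
          constructor
          · have hza : h a = 0 := by rw [hh]; simp
            rw [hpa, hza]; linarith
          · rw [hps]; linarith
        obtain ⟨x, hx, hval⟩ := intermediate_value_Icc (Subtype.coe_le_coe.mpr hs'.1)
          hcont'.continuousOn hmem
        set s₂ := Set.projIcc (0:ℝ) 1 zero_le_one x with hs₂def
        have hs₂mem : s₂ ∈ Set.Icc a b := by
          constructor
          · have hmono := Set.monotone_projIcc zero_le_one hx.1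
            rwa [Set.projIcc_val] at hmono
          · have hxb : x ≤ (b:ℝ) := le_trans hx.2 (Subtype.coe_le_coe.mpr hs'.2)
            have hmono := Set.monotone_projIcc zero_le_one hxb
            rwa [Set.projIcc_val] at hmono
        have hd2 := dich s₂ hs₂mem
        have hveq : h s₂ = δ/2 := hval
        rw [hveq] at hd2
        rcases hd2 with hd2 | hd2 <;> linarith
      obtain ⟨i, hi⟩ := spec a b t
      have hFd : dist (F a t) (F b t) ≤ δ/4 :=
        le_trans (ContinuousMap.dist_apply_le_dist t) (hsmall b ⟨hab, le_rfl⟩)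
      have hib : i = j := by
        by_contra hij
        have h1 : δ ≤ dist (f i (a, t)) (f j (a, t)) := hδle _ _ _ hij
        have h2 : h b ≤ δ/4 := hallsmall b ⟨hab, le_rfl⟩
        have h4 : dist (f i (a, t)) (f j (b, t)) ≤ δ/4 := by
          rw [dist_comm]; exact le_trans hi hFd
        have tri : dist (f i (a, t)) (f j (a, t))
            ≤ dist (f i (a, t)) (f j (b, t)) + dist (f j (b, t)) (f j (a, t)) :=
          dist_triangle _ _ _
        have h5 : dist (f j (b, t)) (f j (a, t)) = h b := by rw [hh]; exact dist_comm _ _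
        rw [h5] at tri
        linarith
      subst hib
      rw [dist_comm] at hi
      exact hi
    have hd : dist (sliceAt (f j) a) (sliceAt (f j) b) ≤ dist (F a) (F b) := by
      rw [ContinuousMap.dist_le dist_nonneg]
      intro t
      calc dist (sliceAt (f j) a t) (sliceAt (f j) b t)
          = dist (f j (a, t)) (f j (b, t)) := rfl
        _ ≤ dist (F a t) (F b t) := hpt t
        _ ≤ dist (F a) (F b) := ContinuousMap.dist_apply_le_dist t
    rw [edist_dist, edist_dist]
    exact ENNReal.ofReal_le_ofReal hd
  exact evar_le_of_small (fun s => sliceAt (f j) s) F (by positivity : (0:ℝ) < η/2) key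
end

section
/- For unitaries a, b in a unital C*-algebra A with a, b in the connected component of the identity and ‖a − b‖ < ε < 1, the C* exponential lengths satisfy |cel(a) − cel(b)| ≤ (π/2)·ε. Moreover, for any unitary u ∈ A, cel(u a u*) = cel(a). -/
open scoped Real ENNReal

/-- The C* exponential length of an element `u` of a unital C*-algebra `A`: the infimum of
lengths (total variations) of continuous paths of unitaries from `1` to `u`
(equivalently, the infimum of `Σ‖h_j‖` over factorizations `u = exp(ih₁)⋯exp(ih_k)`). -/
noncomputable def cel (A : Type*) [NormedRing A] [StarRing A] (u : A) : ℝ≥0∞ :=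
  ⨅ (F : unitInterval → A) (_ : Continuous F) (_ : ∀ s, F s ∈ unitary A)
    (_ : F 0 = 1) (_ : F 1 = u), eVariationOn F Set.univ

section aux

open NormedSpace

variable {A : Type*} [NormedRing A] [StarRing A]
    [CStarRing A] [NormedAlgebra ℂ A] [StarModule ℂ A] [CompleteSpace A]

private lemma arg_le_chord' {z : ℂ} (hz : ‖z‖ = 1) :
    |Complex.arg z| ≤ π / 2 * ‖z - 1‖ := by
  have hz0 : z ≠ 0 := by intro h; rw [h] at hz; simp at hz
  set θ := Complex.arg z with hθ
  have hθπ : |θ| ≤ π := Complex.abs_arg_le_pi z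
  have hcos : Real.cos θ = z.re := by rw [hθ, Complex.cos_arg hz0, hz, div_one]
  have hnormSq : Complex.normSq z = 1 := by rw [← Complex.sq_norm, hz]; norm_num
  have hre : z.re * z.re + z.im * z.im = 1 := by
    simpa [Complex.normSq_apply] using hnormSq
  have hchord : ‖z - 1‖ ^ 2 = 2 - 2 * Real.cos θ := by
    rw [Complex.sq_norm, Complex.normSq_apply]
    simp only [Complex.sub_re, Complex.sub_im, Complex.one_re, Complex.one_im]
    rw [hcos]; ring_nf; nlinarith [hre]
  have hsin : Real.sin (θ / 2) ^ 2 = (1 - Real.cos θ) / 2 := by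
    have h1 := Real.abs_sin_half θ
    have h2 : |Real.sin (θ/2)| ^ 2 = ((1 - Real.cos θ) / 2) := by
      rw [h1, Real.sq_sqrt]; nlinarith [Real.cos_le_one θ]
    rwa [_root_.sq_abs] at h2
  have hchord2 : ‖z - 1‖ = 2 * |Real.sin (θ / 2)| := by
    have h4 : ‖z - 1‖ ^ 2 = (2 * |Real.sin (θ / 2)|) ^ 2 := by
      rw [hchord, mul_pow, _root_.sq_abs, hsin]; ring
    have h5 := abs_nonneg (Real.sin (θ/2))
    nlinarith [norm_nonneg (z - 1)]
  have hsinabs : Real.sin (|θ| / 2) = |Real.sin (θ / 2)| := by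
    rcases le_or_gt 0 θ with h | h
    · rw [_root_.abs_of_nonneg h, _root_.abs_of_nonneg]
      exact Real.sin_nonneg_of_nonneg_of_le_pi (by linarith)
        (by rw [_root_.abs_of_nonneg h] at hθπ; linarith)
    · rw [_root_.abs_of_neg h, _root_.abs_of_nonpos, neg_div, Real.sin_neg]
      apply Real.sin_nonpos_of_nonpos_of_neg_pi_le (by linarith)
      rw [_root_.abs_of_neg h] at hθπ; linarith
  have hj : 2 / π * (|θ| / 2) ≤ Real.sin (|θ| / 2) :=
    Real.mul_le_sin (by positivity) (by linarith)
  have hπ : (0:ℝ) < π := Real.pi_pos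
  rw [hsinabs] at hj
  rw [hchord2]
  calc |θ| = π * (2 / π * (|θ| / 2)) := by field_simp
    _ ≤ π * |Real.sin (θ/2)| := mul_le_mul_of_nonneg_left hj hπ.le
    _ = π / 2 * (2 * |Real.sin (θ/2)|) := by ring

private lemma unitary_log' [Nontrivial A] {v : A} (hv : v ∈ unitary A) (hv1 : ‖v - 1‖ < 1) :
    ∃ h : A, IsSelfAdjoint h ∧ ‖h‖ ≤ π / 2 * ‖v - 1‖ ∧ exp (Complex.I • h) = v := by
  letI : CStarAlgebra A := {}
  have hvn : IsStarNormal v := isStarNormal_of_mem_unitary hv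
  have hspec1 : ∀ z ∈ spectrum ℂ v, ‖z‖ = 1 := fun z hz => by
    simpa using spectrum.subset_circle_of_unitary hv hz
  have hspec2 : ∀ z ∈ spectrum ℂ v, ‖z - 1‖ ≤ ‖v - 1‖ := fun z hz => by
    have : z - 1 ∈ spectrum ℂ (v - algebraMap ℂ A 1) := by
      rw [← spectrum.sub_singleton_eq]
      exact Set.sub_mem_sub hz rfl
    rw [map_one] at this
    simpa using spectrum.norm_le_norm_of_mem this
  have hslit : ∀ z ∈ spectrum ℂ v, z ∈ Complex.slitPlane := fun z hz => by
    rw [Complex.mem_slitPlane_iff]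
    left
    have h1 : ‖z - 1‖ < 1 := lt_of_le_of_lt (hspec2 z hz) hv1
    have h2 : (1 - z).re ≤ ‖1 - z‖ := Complex.re_le_norm _
    rw [← neg_sub, norm_neg] at h1
    simp only [Complex.sub_re, Complex.one_re] at h2
    linarith
  have hcont : ContinuousOn (fun z : ℂ => (Complex.arg z : ℂ)) (spectrum ℂ v) := by
    intro z hz
    exact (Complex.continuous_ofReal.continuousAt.comp
      (Complex.continuousAt_arg (hslit z hz))).continuousWithinAt
  refine ⟨cfc (fun z : ℂ => (Complex.arg z : ℂ)) v, ?_, ?_, ?_⟩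
  · rw [IsSelfAdjoint, ← cfc_star]
    exact cfc_congr fun z _ => by simp [Complex.conj_ofReal]
  · apply norm_cfc_le (by positivity)
    intro z hz
    rw [Complex.norm_real]
    calc |Complex.arg z| ≤ π / 2 * ‖z - 1‖ := arg_le_chord' (hspec1 z hz)
      _ ≤ π / 2 * ‖v - 1‖ := by
          apply mul_le_mul_of_nonneg_left (hspec2 z hz) (by positivity)
  · have h1 : Complex.I • cfc (fun z : ℂ => (Complex.arg z : ℂ)) v
        = cfc (fun z : ℂ => Complex.I * (Complex.arg z : ℂ)) v := by
      rw [← cfc_smul Complex.I (fun z : ℂ => (Complex.arg z : ℂ)) v]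
      simp [smul_eq_mul]
    rw [h1]
    have h2 : IsStarNormal (cfc (fun z : ℂ => Complex.I * (Complex.arg z : ℂ)) v) :=
      cfc_predicate _ v
    rw [← CFC.complex_exp_eq_normedSpace_exp h2]
    rw [← cfc_comp Complex.exp (fun z : ℂ => Complex.I * (Complex.arg z : ℂ)) v]
    conv_rhs => rw [← cfc_id ℂ v hvn]
    apply cfc_congr
    intro z hz
    have := Complex.norm_mul_exp_arg_mul_I z
    rw [hspec1 z hz] at this
    simpa [mul_comm, Function.comp] using this

private lemma cel_le_of_path' {u : A} (F : unitInterval → A) (hF : Continuous F)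
    (hFu : ∀ s, F s ∈ unitary A) (h0 : F 0 = 1) (h1 : F 1 = u) :
    cel A u ≤ eVariationOn F Set.univ :=
  iInf_le_of_le F <| iInf_le_of_le hF <| iInf_le_of_le hFu <| iInf_le_of_le h0 <|
    iInf_le_of_le h1 le_rfl

private lemma le_cel_add' {x c : ℝ≥0∞} {b : A}
    (h : ∀ F : unitInterval → A, Continuous F → (∀ s, F s ∈ unitary A) → F 0 = 1 → F 1 = b →
      x ≤ eVariationOn F Set.univ + c) : x ≤ cel A b + c := by
  simp only [cel, ENNReal.iInf_add]
  exact le_iInf fun F => le_iInf fun hF => le_iInf fun hFu => le_iInf fun h0 => le_iInf fun h1 =>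
    h F hF hFu h0 h1

private lemma le_cel' {x : ℝ≥0∞} {b : A}
    (h : ∀ F : unitInterval → A, Continuous F → (∀ s, F s ∈ unitary A) → F 0 = 1 → F 1 = b →
      x ≤ eVariationOn F Set.univ) : x ≤ cel A b :=
  le_iInf fun F => le_iInf fun hF => le_iInf fun hFu => le_iInf fun h0 => le_iInf fun h1 =>
    h F hF hFu h0 h1

private lemma expSegment_lipschitz' (b x : A) (hb : b ∈ unitary A) (hx : x ∈ skewAdjoint A) :
    LipschitzWith ‖x‖₊ (fun t : ℝ => b * exp ((t : ℂ) • x)) := by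
  have hd : ∀ t : ℝ, HasDerivAt (fun s : ℝ => b * exp ((s : ℂ) • x))
      (b * (exp ((t : ℂ) • x) * x)) t := by
    intro t
    have h1 : HasDerivAt (fun w : ℂ => b * exp (w • x))
        (b * (exp ((t:ℂ) • x) * x)) (t:ℂ) := (hasDerivAt_exp_smul_const x (t:ℂ)).const_mul b
    have hf : HasDerivAt (fun y : ℝ => (y : ℂ)) (1 : ℂ) t := by
      simpa using (hasDerivAt_id t).ofReal_comp
    simpa [Function.comp_def] using HasDerivAt.scomp t h1 hf
  apply lipschitzWith_of_nnnorm_deriv_le (fun t => (hd t).differentiableAt)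
  intro t
  rw [(hd t).deriv]
  have hmem : exp ((t:ℂ) • x) ∈ unitary A := by
    let _ : NormedAlgebra ℚ A := .restrictScalars ℚ ℂ A
    apply exp_mem_unitary_of_mem_skewAdjoint
    rw [Complex.coe_smul]
    exact skewAdjoint.smul_mem t hx
  rw [← mul_assoc]
  have h2 : ‖b * exp ((t:ℂ) • x) * x‖₊ = ‖x‖₊ := by
    have hbu : b * exp ((t:ℂ) • x) ∈ unitary A := mul_mem hb hmem
    have := CStarRing.norm_coe_unitary_mul (⟨_, hbu⟩ : unitary A) x
    simpa [nnnorm, ← NNReal.coe_inj] using congrArg Real.toNNReal this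
  exact le_of_eq h2

private lemma exp_mem_unitary' {x : A} (hx : x ∈ skewAdjoint A) (t : ℝ) :
    exp ((t:ℂ) • x) ∈ unitary A := by
  let _ : NormedAlgebra ℚ A := .restrictScalars ℚ ℂ A
  apply exp_mem_unitary_of_mem_skewAdjoint
  rw [Complex.coe_smul]
  exact skewAdjoint.smul_mem t hx

private lemma key_ineq [Nontrivial A] {a b : A} (ha : a ∈ unitary A) (hb : b ∈ unitary A)
    {ε : ℝ} (hab : ‖a - b‖ < ε) (hε : ε < 1) :
    cel A a ≤ cel A b + ENNReal.ofReal (π / 2 * ε) := by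
  have hb1 : star b * b = 1 := (Unitary.mem_iff.mp hb).1
  have hb2 : b * star b = 1 := (Unitary.mem_iff.mp hb).2
  set v : A := star b * a with hvdef
  have hv : v ∈ unitary A := mul_mem (Unitary.star_mem hb) ha
  have hv1 : ‖v - 1‖ = ‖a - b‖ := by
    have h1 : v - 1 = star b * (a - b) := by rw [mul_sub, hvdef, hb1]
    rw [h1, CStarRing.norm_mem_unitary_mul (a - b) (Unitary.star_mem hb)]
  obtain ⟨h, hsa, hnorm, hexp⟩ := unitary_log' hv (by rw [hv1]; exact hab.trans hε)
  set x : A := Complex.I • h with hxdef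
  have hx : x ∈ skewAdjoint A := hsa.smul_mem_skewAdjoint Complex.conj_I
  have hxnorm : ‖x‖ = ‖h‖ := by
    rw [hxdef, norm_smul, Complex.norm_I, one_mul]
  have hlip := expSegment_lipschitz' b x hb hx
  apply le_cel_add'
  intro F hF hFu h0 h1
  -- construct the concatenated path
  set m : unitInterval := ⟨1/2, by norm_num⟩ with hm
  set ψ : unitInterval → unitInterval :=
    fun σ => Set.projIcc 0 1 zero_le_one (2 * (σ:ℝ)) with hψ
  set L : ℝ → A := fun t => b * exp ((t : ℂ) • x) with hL
  set g : unitInterval → ℝ := fun σ => 2 * (σ:ℝ) - 1 with hg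
  set G : unitInterval → A := fun σ => if (σ:ℝ) ≤ 1/2 then F (ψ σ) else L (g σ) with hG
  have hψ1 : ψ m = 1 := by
    apply Subtype.ext
    simp [hψ, hm, Set.projIcc]
  have hψ0 : ψ 0 = 0 := by
    apply Subtype.ext
    simp [hψ, Set.projIcc]
  have hLm : L (g m) = b := by
    simp only [hL, hg, hm]
    norm_num
  have hagree : ∀ σ : unitInterval, (σ:ℝ) = 1/2 → F (ψ σ) = L (g σ) := by
    intro σ hσ
    have hσm : σ = m := Subtype.ext hσ
    rw [hσm, hψ1, h1, hLm]
  have hψcont : Continuous ψ := by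
    exact continuous_projIcc.comp (continuous_const.mul continuous_subtype_val)
  have hgcont : Continuous g := by
    exact (continuous_const.mul continuous_subtype_val).sub continuous_const
  have hGcont : Continuous G := by
    apply Continuous.if_le (hF.comp hψcont) ((hlip.continuous).comp hgcont)
      continuous_subtype_val continuous_const
    exact fun σ hσ => hagree σ hσ
  have hGu : ∀ σ, G σ ∈ unitary A := by
    intro σ
    by_cases hc : (σ:ℝ) ≤ 1/2
    · simp only [hG, if_pos hc]; exact hFu _
    · simp only [hG, if_neg hc]
      exact mul_mem hb (exp_mem_unitary' hx (g σ))
  have hG0 : G 0 = 1 := by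
    have hc : ((0:unitInterval):ℝ) ≤ 1/2 := by norm_num
    simp only [hG, if_pos hc, hψ0, h0]
  have hG1 : G 1 = a := by
    have hc : ¬ ((1:unitInterval):ℝ) ≤ 1/2 := by norm_num
    simp only [hG, if_neg hc, hL, hg]
    norm_num
    rw [hexp, hvdef, ← mul_assoc, hb2, one_mul]
  refine (cel_le_of_path' G hGcont hGu hG0 hG1).trans ?_
  -- bound the variation
  have hsplit : eVariationOn G Set.univ
      = eVariationOn G (Set.Iic m) + eVariationOn G (Set.Ici m) := by
    rw [← Set.Iic_union_Ici (a := m)]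
    exact eVariationOn.union G isGreatest_Iic isLeast_Ici
  have hbound1 : eVariationOn G (Set.Iic m) ≤ eVariationOn F Set.univ := by
    have heq : Set.EqOn G (F ∘ ψ) (Set.Iic m) := by
      intro σ hσ
      have hc : (σ:ℝ) ≤ 1/2 := hσ
      simp only [hG, if_pos hc, Function.comp]
    rw [eVariationOn.eq_of_eqOn heq]
    apply eVariationOn.comp_le_of_monotoneOn
    · intro σ _ τ _ hστ
      have hc : (σ:ℝ) ≤ (τ:ℝ) := Subtype.coe_le_coe.mpr hστ
      exact Set.monotone_projIcc zero_le_one (by linarith)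
    · exact Set.mapsTo_univ _ _
  have hbound2 : eVariationOn G (Set.Ici m) ≤ ENNReal.ofReal (π / 2 * ε) := by
    have heq : Set.EqOn G (L ∘ g) (Set.Ici m) := by
      intro σ hσ
      by_cases hc : (σ:ℝ) ≤ 1/2
      · have hc2 : (σ:ℝ) = 1/2 := le_antisymm hc hσ
        simp only [hG, if_pos hc, Function.comp]
        exact hagree σ hc2
      · simp only [hG, if_neg hc, Function.comp]
    rw [eVariationOn.eq_of_eqOn heq]
    have hstep := (hlip.lipschitzOnWith (s := Set.univ)).comp_eVariationOn_le
      (Set.mapsTo_univ g (Set.Ici m))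
    refine hstep.trans ?_
    have hgvar : eVariationOn g (Set.Ici m) ≤ ENNReal.ofReal 1 := by
      have hmono : MonotoneOn g Set.univ := by
        intro σ _ τ _ hστ
        simp only [hg]
        have : (σ:ℝ) ≤ (τ:ℝ) := hστ
        linarith
      have hle := hmono.eVariationOn_le (a := m) (b := 1) trivial trivial
      have hsub : Set.Ici m ⊆ Set.univ ∩ Set.Icc m 1 := by
        intro σ hσ
        exact ⟨trivial, hσ, Subtype.coe_le_coe.mp (by exact σ.2.2)⟩
      refine (eVariationOn.mono g hsub).trans (hle.trans ?_)
      apply ENNReal.ofReal_le_ofReal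
      simp only [hg, hm]
      norm_num
    calc (‖x‖₊ : ℝ≥0∞) * eVariationOn g (Set.Ici m)
        ≤ (‖x‖₊ : ℝ≥0∞) * ENNReal.ofReal 1 := mul_le_mul_right hgvar _
      _ = (‖x‖₊ : ℝ≥0∞) := by simp
      _ ≤ ENNReal.ofReal (π / 2 * ε) := by
          rw [← enorm_eq_nnnorm, ← ofReal_norm]
          apply ENNReal.ofReal_le_ofReal
          rw [hxnorm]
          calc ‖h‖ ≤ π/2 * ‖v - 1‖ := hnorm
            _ ≤ π/2 * ε := by
                apply mul_le_mul_of_nonneg_left _ (by positivity)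
                rw [hv1]; exact hab.le
  rw [hsplit]
  exact add_le_add hbound1 hbound2

private lemma cel_conj_le' {u : A} (hu : u ∈ unitary A) (a : A) :
    cel A (u * a * star u) ≤ cel A a := by
  have hu1 : star u * u = 1 := (Unitary.mem_iff.mp hu).1
  have hu2 : u * star u = 1 := (Unitary.mem_iff.mp hu).2
  have hlip : LipschitzWith 1 (fun y : A => u * y * star u) := by
    apply LipschitzWith.of_dist_le_mul
    intro y z
    rw [NNReal.coe_one, one_mul, dist_eq_norm, dist_eq_norm]
    have heq : u * y * star u - u * z * star u = (u * (y - z)) * star u := by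
      rw [mul_sub, sub_mul]
    rw [heq, CStarRing.norm_mul_mem_unitary _ (Unitary.star_mem hu),
      CStarRing.norm_mem_unitary_mul _ hu]
  apply le_cel'
  intro F hF hFu h0 h1
  have := cel_le_of_path' (fun σ => u * F σ * star u)
    ((continuous_const.mul hF).mul continuous_const)
    (fun s => mul_mem (mul_mem hu (hFu s)) (Unitary.star_mem hu))
    (show u * F 0 * star u = 1 by rw [h0, mul_one, hu2])
    (show u * F 1 * star u = u * a * star u by rw [h1])
  refine this.trans ?_
  have hcomp := (hlip.lipschitzOnWith (s := Set.univ)).comp_eVariationOn_le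
    (Set.mapsTo_univ F Set.univ)
  simpa [Function.comp_def] using hcomp

end aux

/-- For unitaries `a, b` in the connected component of the identity of a unital C*-algebra
with `‖a − b‖ < ε < 1`, one has `|cel(a) − cel(b)| ≤ (π/2)·ε`; moreover conjugation by any
unitary `u` preserves the exponential length: `cel(u a u*) = cel(a)`. -/
theorem cel_continuity_and_conjugation (A : Type*) [NormedRing A] [StarRing A]
    [CStarRing A] [NormedAlgebra ℂ A] [StarModule ℂ A] [CompleteSpace A]
    (a b : A) (ha : a ∈ unitary A) (hb : b ∈ unitary A)
    (hapath : ∃ F : unitInterval → A, Continuous F ∧ (∀ s, F s ∈ unitary A) ∧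
      F 0 = 1 ∧ F 1 = a)
    (hbpath : ∃ F : unitInterval → A, Continuous F ∧ (∀ s, F s ∈ unitary A) ∧
      F 0 = 1 ∧ F 1 = b)
    (ε : ℝ) (hab : ‖a - b‖ < ε) (hε : ε < 1) :
    cel A a ≤ cel A b + ENNReal.ofReal (π / 2 * ε) ∧
    cel A b ≤ cel A a + ENNReal.ofReal (π / 2 * ε) ∧
    ∀ u ∈ unitary A, cel A (u * a * star u) = cel A a := by
  have hconj : ∀ u ∈ unitary A, cel A (u * a * star u) = cel A a := by
    intro u hu
    refine le_antisymm (cel_conj_le' hu a) ?_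
    have h2 := cel_conj_le' (Unitary.star_mem hu) (u * a * star u)
    have heq : star u * (u * a * star u) * star (star u) = a := by
      rw [star_star]
      have hassoc : star u * (u * a * star u) * u = (star u * u) * a * (star u * u) := by
        simp only [mul_assoc]
      rw [hassoc, (Unitary.mem_iff.mp hu).1, one_mul, mul_one]
    rwa [heq] at h2
  rcases subsingleton_or_nontrivial A with hsub | hnt
  · refine ⟨?_, ?_, hconj⟩
    · rw [Subsingleton.elim a b]; exact le_self_add
    · rw [Subsingleton.elim b a]; exact le_self_add
  · exact ⟨key_ineq ha hb hab hε, key_ineq hb ha (by rwa [norm_sub_rev]) hε, hconj⟩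
end
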